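/- arXiv:2112.14525 — 4 statements merged into one kernel-verified Lean document; each statement's English description precedes it below -/
import Mathlib

section
/- Let H be a real Hilbert space, C ⊆ H a nonempty closed convex subset, and T, U : C → C nonexpansive maps such that F := Fix(T) ∩ Fix(U) is nonempty. Let u, x₀ ∈ C and let (α_n) ⊂ [0,1], (β_n) ⊂ (0,1) satisfy: (i) lim α_n = 0; (ii) ∑ α_n = ∞; (iii) ∑ |α_{n+1} − α_n| < ∞; (iv) ∑ |β_{n+1} − β_n| < ∞; (v) 0 < liminf β_n ≤ limsup β_n < 1. Then the alternating Halpern–Mann iteration (x_n) with anchor u and starting point x₀ converges strongly to a point z ∈ F satisfying ‖u − z‖ ≤ ‖u − y‖ for all y ∈ F (the metric projection of u onto F). -/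
open Filter

section helpers

variable {E : Type*} [NormedAddCommGroup E] [InnerProductSpace ℝ E]

lemma hm_comb_sub (a b q : E) (s : ℝ) :
    (1 - s) • a + s • b - q = (1 - s) • (a - q) + s • (b - q) := by
  module

lemma hm_norm_comb_le {s : ℝ} (h0 : 0 ≤ s) (h1 : s ≤ 1) (a b : E) :
    ‖(1 - s) • a + s • b‖ ≤ (1 - s) * ‖a‖ + s * ‖b‖ := by
  calc ‖(1 - s) • a + s • b‖ ≤ ‖(1 - s) • a‖ + ‖s • b‖ := norm_add_le _ _
    _ = (1 - s) * ‖a‖ + s * ‖b‖ := by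
        rw [norm_smul, norm_smul, Real.norm_eq_abs, Real.norm_eq_abs,
          abs_of_nonneg h0, abs_of_nonneg (by linarith)]

lemma hm_norm_comb_sq {s : ℝ} (h0 : 0 ≤ s) (h1 : s ≤ 1) (a b : E) :
    ‖(1 - s) • a + s • b‖ ^ 2
      = (1 - s) ^ 2 * ‖a‖ ^ 2 + 2 * s * (1 - s) * (inner ℝ a b : ℝ) + s ^ 2 * ‖b‖ ^ 2 := by
  have h₁ := norm_add_sq_real ((1 - s) • a) (s • b)
  rw [norm_smul, norm_smul, real_inner_smul_left, real_inner_smul_right,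
    Real.norm_eq_abs, Real.norm_eq_abs, abs_of_nonneg h0, abs_of_nonneg (by linarith)] at h₁
  rw [h₁]; ring

lemma hm_mann_identity {s : ℝ} (h0 : 0 ≤ s) (h1 : s ≤ 1) (a b : E) :
    ‖(1 - s) • a + s • b‖ ^ 2
      = (1 - s) * ‖a‖ ^ 2 + s * ‖b‖ ^ 2 - s * (1 - s) * ‖a - b‖ ^ 2 := by
  have h₁ := hm_norm_comb_sq h0 h1 a b
  have h₂ := norm_sub_sq_real a b
  rw [h₁, h₂]; ring

end helpers


lemma hm_xu (a t b c : ℕ → ℝ) (ha : ∀ n, 0 ≤ a n)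
    (ht0 : ∀ n, 0 ≤ t n) (ht1 : ∀ n, t n ≤ 1) (hc0 : ∀ n, 0 ≤ c n)
    (hrec : ∀ n, a (n + 1) ≤ (1 - t n) * a n + t n * b n + c n)
    (hdiv : Tendsto (fun n => ∑ i ∈ Finset.range n, t i) atTop atTop)
    (hb : ∀ ε > 0, ∀ᶠ n in atTop, b n ≤ ε)
    (hc : Summable c) :
    Tendsto a atTop (nhds 0) := by
  have key : ∀ ε > 0, ∀ᶠ n in atTop, a n < ε := by
    intro ε hε
    have hε4 : 0 < ε / 4 := by linarith
    -- tail of c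
    have htail : Tendsto (fun i => ∑' k, c (k + i)) atTop (nhds 0) := tendsto_sum_nat_add c
    have htail' : ∀ᶠ i in atTop, ∑' k, c (k + i) < ε / 4 :=
      htail.eventually (eventually_lt_nhds hε4) -- maybe wrong name
    obtain ⟨N, hNb, hNtail⟩ :
        ∃ N, (∀ n ≥ N, b n ≤ ε / 4) ∧ (∑' k, c (k + N) < ε / 4) := by
      obtain ⟨N1, h1⟩ := eventually_atTop.mp (hb (ε / 4) hε4)
      obtain ⟨N2, h2⟩ := eventually_atTop.mp htail'
      exact ⟨max N1 N2, fun n hn => h1 n (le_trans (le_max_left _ _) hn),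
        h2 _ (le_max_right _ _)⟩
    set S : ℕ → ℝ := fun m => ∏ k ∈ Finset.range m, (1 - t (N + k)) with hS
    have hcsum : Summable (fun k => c (k + N)) := (summable_nat_add_iff N).mpr hc
    have hsumc : ∀ m, ∑ k ∈ Finset.range m, c (N + k) ≤ ε / 4 := by
      intro m
      have h1 : ∑ k ∈ Finset.range m, c (N + k) = ∑ k ∈ Finset.range m, c (k + N) := by
        apply Finset.sum_congr rfl; intro i _; rw [add_comm]
      rw [h1]
      exact le_trans (Summable.sum_le_tsum _ (fun i _ => hc0 _) hcsum) hNtail.le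
    have claim : ∀ m, a (N + m) ≤ S m * a N + ε / 4 + ∑ k ∈ Finset.range m, c (N + k) := by
      intro m
      induction m with
      | zero => simp [hS]; linarith [hε4]
      | succ m ih =>
        have h0 := ht0 (N + m); have h1 := ht1 (N + m)
        have hbm : b (N + m) ≤ ε / 4 := hNb _ (Nat.le_add_right _ _)
        have hrec' := hrec (N + m)
        have hmul : (1 - t (N + m)) * a (N + m)
            ≤ (1 - t (N + m)) * (S m * a N + ε / 4 + ∑ k ∈ Finset.range m, c (N + k)) :=
          mul_le_mul_of_nonneg_left ih (by linarith)
        have htb : t (N + m) * b (N + m) ≤ t (N + m) * (ε / 4) :=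
          mul_le_mul_of_nonneg_left hbm h0
        have hSsucc : S (m + 1) = S m * (1 - t (N + m)) := by
          rw [hS]; exact Finset.prod_range_succ _ _
        have hsnn : 0 ≤ ∑ k ∈ Finset.range m, c (N + k) :=
          Finset.sum_nonneg fun i _ => hc0 _
        have hcsucc : ∑ k ∈ Finset.range (m + 1), c (N + k)
            = (∑ k ∈ Finset.range m, c (N + k)) + c (N + m) := Finset.sum_range_succ _ _
        have hNm : N + (m + 1) = (N + m) + 1 := by omega
        rw [hNm, hSsucc, hcsucc]
        have haN : 0 ≤ a N := ha N
        nlinarith [hrec', hmul, htb, hsnn, h0, h1, haN]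
    have hSnn : ∀ m, 0 ≤ S m := by
      intro m; apply Finset.prod_nonneg; intro i _; linarith [ht1 (N + i)]
    have hSexp : ∀ m, S m ≤ Real.exp (-(∑ k ∈ Finset.range m, t (N + k))) := by
      intro m
      induction m with
      | zero => simp [hS]
      | succ m ih =>
        simp only [hS]
        rw [Finset.prod_range_succ, Finset.sum_range_succ, neg_add, Real.exp_add]
        have h1 : (1 : ℝ) - t (N + m) ≤ Real.exp (-(t (N + m))) := by
          linarith [Real.add_one_le_exp (-(t (N + m)))]
        have h2 : (0:ℝ) ≤ 1 - t (N + m) := by linarith [ht1 (N + m)]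
        exact mul_le_mul ih h1 h2 (Real.exp_nonneg _)
    have hsumt : Tendsto (fun m => ∑ k ∈ Finset.range m, t (N + k)) atTop atTop := by
      have h1 : ∀ m, ∑ k ∈ Finset.range m, t (N + k)
          = (∑ i ∈ Finset.range (N + m), t i) - ∑ i ∈ Finset.range N, t i := by
        intro m; rw [Finset.sum_range_add]; ring
      simp only [h1]
      apply tendsto_atTop_add_const_right
      have : Tendsto (fun m : ℕ => N + m) atTop atTop := by
        simpa [add_comm] using tendsto_add_atTop_nat N
      exact hdiv.comp this
    have hexp : Tendsto (fun m => Real.exp (-(∑ k ∈ Finset.range m, t (N + k))) * a N)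
        atTop (nhds 0) := by
      have h1 : Tendsto (fun m => -(∑ k ∈ Finset.range m, t (N + k))) atTop atBot :=
        tendsto_neg_atTop_atBot.comp hsumt
      simpa using (Real.tendsto_exp_atBot.comp h1).mul_const (a N)
    have hev : ∀ᶠ m in atTop,
        Real.exp (-(∑ k ∈ Finset.range m, t (N + k))) * a N < ε / 4 := by
      have := hexp.eventually (eventually_lt_nhds hε4)
      exact this
    obtain ⟨M, hM⟩ := eventually_atTop.mp hev
    rw [eventually_atTop]
    refine ⟨N + M, fun n hn => ?_⟩
    obtain ⟨m, rfl⟩ : ∃ m, n = N + m := ⟨n - N, by omega⟩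
    have hmM : m ≥ M := by omega
    have h1 := claim m
    have h2 : S m * a N ≤ Real.exp (-(∑ k ∈ Finset.range m, t (N + k))) * a N :=
      mul_le_mul_of_nonneg_right (hSexp m) (ha N)
    have h3 := hM m hmM
    have h4 := hsumc m
    linarith
  rw [Metric.tendsto_atTop]
  intro ε hε
  obtain ⟨N, hN⟩ := eventually_atTop.mp (key ε hε)
  exact ⟨N, fun n hn => by
    rw [Real.dist_eq, sub_zero, abs_of_nonneg (ha n)]; exact hN n hn⟩


lemma hm_weak_subseq {H : Type*} [NormedAddCommGroup H] [InnerProductSpace ℝ H]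
    [CompleteSpace H] (x : ℕ → H) (M : ℝ) (hb : ∀ n, ‖x n‖ ≤ M) :
    ∃ (w : H) (φ : ℕ → ℕ), StrictMono φ ∧
      ∀ y : H, Tendsto (fun k => (inner ℝ (x (φ k)) y : ℝ)) atTop (nhds (inner ℝ w y)) := by
  have hM0 : (0:ℝ) ≤ M := le_trans (norm_nonneg _) (hb 0)
  -- diagonal extraction via sequential compactness of a product of intervals
  set g : ℕ → ℕ → ℝ := fun k m => inner ℝ (x k) (x m) with hg
  have hgmem : ∀ k, g k ∈ Set.univ.pi (fun _ : ℕ => Set.Icc (-(M*M)) (M*M)) := by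
    intro k m _
    have h1 := abs_real_inner_le_norm (x k) (x m)
    have h2 : ‖x k‖ * ‖x m‖ ≤ M * M :=
      mul_le_mul (hb k) (hb m) (norm_nonneg _) hM0
    have h3 : |g k m| ≤ M * M := le_trans h1 h2
    exact abs_le.mp h3
  have hcpt : IsCompact (Set.univ.pi (fun _ : ℕ => Set.Icc (-(M*M)) (M*M))) :=
    isCompact_univ_pi fun _ => isCompact_Icc
  obtain ⟨L, -, φ, hφ, hL⟩ := hcpt.isSeqCompact hgmem
  have hLpt : ∀ m, Tendsto (fun k => (inner ℝ (x (φ k)) (x m) : ℝ)) atTop (nhds (L m)) := by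
    intro m; exact (tendsto_pi_nhds.mp hL) m
  -- closed span
  set K : Submodule ℝ H := (Submodule.span ℝ (Set.range x)).topologicalClosure with hK
  have hxK : ∀ n, x n ∈ K :=
    fun n => (Submodule.span ℝ (Set.range x)).le_topologicalClosure
      (Submodule.subset_span ⟨n, rfl⟩)
  haveI : CompleteSpace K := (Submodule.isClosed_topologicalClosure _).completeSpace_coe
  have hconv_span : ∀ y ∈ Submodule.span ℝ (Set.range x),
      ∃ r, Tendsto (fun k => (inner ℝ (x (φ k)) y : ℝ)) atTop (nhds r) := by
    intro y hy
    induction hy using Submodule.span_induction with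
    | mem y hy => obtain ⟨m, rfl⟩ := hy; exact ⟨L m, hLpt m⟩
    | zero => exact ⟨0, by simpa using (tendsto_const_nhds : Tendsto (fun _ : ℕ => (0:ℝ)) atTop _)⟩
    | add y z _ _ hy hz =>
        obtain ⟨r1, h1⟩ := hy; obtain ⟨r2, h2⟩ := hz
        exact ⟨r1 + r2, by simpa [inner_add_right] using h1.add h2⟩
    | smul a y _ hy =>
        obtain ⟨r, h⟩ := hy
        exact ⟨a * r, by simpa [real_inner_smul_right] using h.const_mul a⟩
  have hconv : ∀ y : K, ∃ r, Tendsto (fun k => (inner ℝ (x (φ k)) (y:H) : ℝ)) atTop (nhds r) := by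
    intro y
    have hCauchy : CauchySeq (fun k => (inner ℝ (x (φ k)) (y:H) : ℝ)) := by
      rw [Metric.cauchySeq_iff]
      intro ε hε
      have hyc : (y : H) ∈ closure (Submodule.span ℝ (Set.range x) : Set H) := y.2
      obtain ⟨y', hy'span, hy'⟩ : ∃ y' ∈ (Submodule.span ℝ (Set.range x) : Set H),
          dist (y:H) y' < ε / (4 * (M + 1)) := by
        rw [Metric.mem_closure_iff] at hyc
        obtain ⟨y', h1, h2⟩ := hyc (ε / (4 * (M + 1))) (by positivity)
        exact ⟨y', h1, h2⟩
      obtain ⟨r, hr⟩ := hconv_span y' hy'span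
      have hr' : CauchySeq (fun k => (inner ℝ (x (φ k)) y' : ℝ)) := hr.cauchySeq
      rw [Metric.cauchySeq_iff] at hr'
      obtain ⟨N, hN⟩ := hr' (ε / 2) (by linarith)
      refine ⟨N, fun m hm n hn => ?_⟩
      have key : ∀ k, |(inner ℝ (x (φ k)) (y:H) : ℝ) - inner ℝ (x (φ k)) y'| < ε / 4 := by
        intro k
        have h1 : (inner ℝ (x (φ k)) (y:H) : ℝ) - inner ℝ (x (φ k)) y'
            = inner ℝ (x (φ k)) ((y:H) - y') := by rw [inner_sub_right]
        rw [h1]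
        have h2 := abs_real_inner_le_norm (x (φ k)) ((y:H) - y')
        have h3 : ‖x (φ k)‖ * ‖(y:H) - y'‖ ≤ M * ‖(y:H) - y'‖ :=
          mul_le_mul_of_nonneg_right (hb _) (norm_nonneg _)
        have h4 : ‖(y:H) - y'‖ < ε / (4 * (M + 1)) := by
          rw [← dist_eq_norm]; exact hy'
        have h5 : M * ‖(y:H) - y'‖ < ε / 4 := by
          calc M * ‖(y:H) - y'‖ ≤ (M + 1) * ‖(y:H) - y'‖ := by
                have := norm_nonneg ((y:H) - y'); nlinarith
            _ < (M + 1) * (ε / (4 * (M + 1))) := by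
                apply mul_lt_mul_of_pos_left h4; linarith
            _ = ε / 4 := by field_simp
        linarith [le_trans h2 h3]
      have hd := hN m hm n hn
      rw [Real.dist_eq] at hd ⊢
      have k1 := key m; have k2 := key n
      have t1 := abs_sub_le (inner ℝ (x (φ m)) (y:H) : ℝ) (inner ℝ (x (φ m)) y' : ℝ)
        (inner ℝ (x (φ n)) (y:H) : ℝ)
      have t2 := abs_sub_le (inner ℝ (x (φ m)) y' : ℝ) (inner ℝ (x (φ n)) y' : ℝ)
        (inner ℝ (x (φ n)) (y:H) : ℝ)
      have t3 : |(inner ℝ (x (φ n)) y' : ℝ) - (inner ℝ (x (φ n)) (y:H) : ℝ)|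
          = |(inner ℝ (x (φ n)) (y:H) : ℝ) - (inner ℝ (x (φ n)) y' : ℝ)| := abs_sub_comm _ _
      linarith
    exact cauchySeq_tendsto_of_complete hCauchy
  -- build the limit functional
  choose f hf using hconv
  have hadd : ∀ y z : K, f (y + z) = f y + f z := by
    intro y z
    refine tendsto_nhds_unique (hf (y + z)) ?_
    have := (hf y).add (hf z)
    simpa [inner_add_right] using this
  have hsmul : ∀ (a : ℝ) (y : K), f (a • y) = a * f y := by
    intro a y
    refine tendsto_nhds_unique (hf (a • y)) ?_
    have := (hf y).const_mul a
    simpa [real_inner_smul_right] using this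
  have hbound : ∀ y : K, ‖f y‖ ≤ M * ‖y‖ := by
    intro y
    rw [Real.norm_eq_abs]
    refine le_of_tendsto (hf y).abs (Eventually.of_forall fun k => ?_)
    calc |(inner ℝ (x (φ k)) (y:H) : ℝ)| ≤ ‖x (φ k)‖ * ‖(y:H)‖ := abs_real_inner_le_norm _ _
      _ ≤ M * ‖(y:H)‖ := mul_le_mul_of_nonneg_right (hb _) (norm_nonneg _)
      _ = M * ‖y‖ := rfl
  set f0 : K →ₗ[ℝ] ℝ :=
    { toFun := f
      map_add' := hadd
      map_smul' := by intro a y; simpa using hsmul a y } with hf0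
  set f' : K →L[ℝ] ℝ := LinearMap.mkContinuous f0 M hbound with hf'
  set w0 : K := (InnerProductSpace.toDual ℝ K).symm f' with hw0
  refine ⟨(w0 : H), φ, hφ, fun y => ?_⟩
  -- orthogonal projection onto K
  set P : K := K.orthogonalProjectionOnto y with hP
  have hperp : y - (P : H) ∈ Kᗮ := Submodule.sub_starProjection_mem_orthogonal (K := K) y
  have hzero : ∀ v ∈ K, (inner ℝ v (y - (P : H)) : ℝ) = 0 :=
    (Submodule.mem_orthogonal K _).mp hperp
  have hxy : ∀ k, (inner ℝ (x (φ k)) y : ℝ) = inner ℝ (x (φ k)) ((P : H)) := by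
    intro k
    have h1 := hzero _ (hxK (φ k))
    have h2 : (inner ℝ (x (φ k)) y : ℝ) - inner ℝ (x (φ k)) ((P : H)) = 0 := by
      rw [← inner_sub_right]; exact h1
    linarith
  have hwy : (inner ℝ ((w0:H)) y : ℝ) = inner ℝ ((w0:H)) ((P : H)) := by
    have h1 := hzero _ w0.2
    have h2 : (inner ℝ ((w0:H)) y : ℝ) - inner ℝ ((w0:H)) ((P : H)) = 0 := by
      rw [← inner_sub_right]; exact h1
    linarith
  have hwP : (inner ℝ ((w0:H)) ((P : H)) : ℝ) = f P := by
    have h1 : (inner ℝ w0 P : ℝ) = f' P := InnerProductSpace.toDual_symm_apply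
    have h2 : (inner ℝ w0 P : ℝ) = inner ℝ ((w0:H)) ((P:H)) := Submodule.coe_inner K w0 P
    rw [← h2, h1]
    rfl
  have hgoal := hf P
  rw [hwy, hwP]
  simp only [hxy]
  exact hgoal


lemma hm_demiclosed {H : Type*} [NormedAddCommGroup H] [InnerProductSpace ℝ H]
    [CompleteSpace H]
    (C : Set H) (hCclosed : IsClosed C) (hCconv : Convex ℝ C)
    (T : H → H) (hTne : ∀ a ∈ C, ∀ b ∈ C, ‖T a - T b‖ ≤ ‖a - b‖)
    (y : ℕ → H) (hyC : ∀ n, y n ∈ C) (w : H) (M : ℝ) (hyb : ∀ n, ‖y n‖ ≤ M)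
    (hw : ∀ v : H, Tendsto (fun k => (inner ℝ (y k) v : ℝ)) atTop (nhds (inner ℝ w v)))
    (hreg : Tendsto (fun n => ‖y n - T (y n)‖) atTop (nhds 0)) :
    w ∈ C ∧ T w = w := by
  -- w ∈ C via the metric projection onto C
  have hwC : w ∈ C := by
    have hCne' : C.Nonempty := ⟨y 0, hyC 0⟩
    obtain ⟨v, hvC, hvmin⟩ :=
      exists_norm_eq_iInf_of_complete_convex hCne' hCclosed.isComplete hCconv w
    have hvar := (norm_eq_iInf_iff_real_inner_le_zero hCconv hvC).mp hvmin
    have h1 : ∀ n, (inner ℝ (y n) (w - v) : ℝ) - inner ℝ v (w - v) ≤ 0 := by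
      intro n
      have h2 := hvar (y n) (hyC n)
      have h3 : (inner ℝ (w - v) (y n - v) : ℝ) = inner ℝ (y n) (w - v) - inner ℝ v (w - v) := by
        rw [real_inner_comm, inner_sub_left]
      linarith
    have hlim : Tendsto (fun n => (inner ℝ (y n) (w - v) : ℝ) - inner ℝ v (w - v)) atTop
        (nhds ((inner ℝ w (w - v) : ℝ) - inner ℝ v (w - v))) := (hw (w - v)).sub_const _
    have h4 : (inner ℝ w (w - v) : ℝ) - inner ℝ v (w - v) ≤ 0 :=
      le_of_tendsto hlim (Eventually.of_forall h1)
    have h5 : (inner ℝ (w - v) (w - v) : ℝ) ≤ 0 := by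
      rw [inner_sub_left]; linarith
    have h6 : ‖w - v‖ ^ 2 ≤ 0 := by
      rw [← real_inner_self_eq_norm_sq]; exact h5
    have h7 : w - v = 0 := by
      have := norm_nonneg (w - v)
      have h8 : ‖w - v‖ = 0 := by nlinarith
      exact norm_eq_zero.mp h8
    have : w = v := by rwa [sub_eq_zero] at h7
    rw [this]; exact hvC
  refine ⟨hwC, ?_⟩
  -- demiclosedness
  set d : ℕ → ℝ := fun n => ‖y n - T (y n)‖ with hd
  have key : ∀ n, ‖w - T w‖ ^ 2
      ≤ d n ^ 2 + 2 * d n * ‖y n - w‖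
        - 2 * ((inner ℝ (y n) (w - T w) : ℝ) - inner ℝ w (w - T w)) := by
    intro n
    have hexp : ‖y n - T w‖ ^ 2
        = ‖y n - w‖ ^ 2 + 2 * (inner ℝ (y n - w) (w - T w) : ℝ) + ‖w - T w‖ ^ 2 := by
      have h0 := norm_add_sq_real (y n - w) (w - T w)
      rw [show (y n - w) + (w - T w) = y n - T w by abel] at h0
      exact h0
    have htri : ‖y n - T w‖ ≤ d n + ‖y n - w‖ := by
      have h1 : y n - T w = (y n - T (y n)) + (T (y n) - T w) := by abel
      calc ‖y n - T w‖ ≤ ‖y n - T (y n)‖ + ‖T (y n) - T w‖ := by rw [h1]; exact norm_add_le _ _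
        _ ≤ d n + ‖y n - w‖ := by
            have := hTne (y n) (hyC n) w hwC
            simp only [hd]; linarith
    have hsq : ‖y n - T w‖ ^ 2 ≤ (d n + ‖y n - w‖) ^ 2 :=
      pow_le_pow_left₀ (norm_nonneg _) htri 2
    have hinner : (inner ℝ (y n - w) (w - T w) : ℝ)
        = inner ℝ (y n) (w - T w) - inner ℝ w (w - T w) := inner_sub_left _ _ _
    nlinarith [hexp, hsq, hinner]
  have hrhs : Tendsto (fun n => d n ^ 2 + 2 * d n * ‖y n - w‖
      - 2 * ((inner ℝ (y n) (w - T w) : ℝ) - inner ℝ w (w - T w))) atTop (nhds 0) := by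
    have h1 : Tendsto (fun n => d n ^ 2) atTop (nhds 0) := by
      have := hreg.mul hreg; simpa [pow_two] using this
    have h2 : Tendsto (fun n => 2 * d n * ‖y n - w‖) atTop (nhds 0) := by
      have hlim : Tendsto (fun n => 2 * d n * (M + ‖w‖)) atTop (nhds 0) := by
        have := (hreg.const_mul 2).mul_const (M + ‖w‖)
        simpa using this
      refine squeeze_zero (fun n => by positivity) (fun n => ?_) hlim
      have hb : ‖y n - w‖ ≤ M + ‖w‖ := by
        calc ‖y n - w‖ ≤ ‖y n‖ + ‖w‖ := norm_sub_le _ _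
          _ ≤ M + ‖w‖ := by linarith [hyb n]
      apply mul_le_mul_of_nonneg_left hb
      positivity
    have h3 : Tendsto (fun n => (inner ℝ (y n) (w - T w) : ℝ) - inner ℝ w (w - T w)) atTop
        (nhds 0) := by
      have := (hw (w - T w)).sub_const (inner ℝ w (w - T w) : ℝ)
      simpa using this
    have := (h1.add h2).sub (h3.const_mul 2)
    simpa [mul_comm] using this
  have hle : ‖w - T w‖ ^ 2 ≤ 0 := ge_of_tendsto hrhs (Eventually.of_forall key)
  have h8 : ‖w - T w‖ = 0 := by
    have := norm_nonneg (w - T w); nlinarith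
  have h9 : w - T w = 0 := norm_eq_zero.mp h8
  have : T w = w := by
    have := sub_eq_zero.mp h9; exact this.symm
  exact this

lemma hm_interleave {E : Type*} [PseudoMetricSpace E] (x : ℕ → E) (z : E)
    (he : Tendsto (fun n => x (2 * n)) atTop (nhds z))
    (ho : Tendsto (fun n => x (2 * n + 1)) atTop (nhds z)) :
    Tendsto x atTop (nhds z) := by
  rw [Metric.tendsto_atTop] at he ho ⊢
  intro ε hε
  obtain ⟨N1, h1⟩ := he ε hε
  obtain ⟨N2, h2⟩ := ho ε hε
  refine ⟨2 * (max N1 N2) + 1, fun n hn => ?_⟩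
  rcases Nat.even_or_odd n with ⟨m, hm⟩ | ⟨m, hm⟩
  · have hn2 : n = 2 * m := by omega
    rw [hn2]
    exact h1 m (by omega)
  · have hn2 : n = 2 * m + 1 := by omega
    rw [hn2]
    exact h2 m (by omega)

section mainhelpers

variable {E : Type*} [NormedAddCommGroup E] [InnerProductSpace ℝ E]

lemma hm_sq_to_self (f : ℕ → ℝ) (hf : ∀ n, 0 ≤ f n)
    (h : Tendsto (fun n => f n ^ 2) atTop (nhds 0)) : Tendsto f atTop (nhds 0) := by
  have h1 : Tendsto (fun n => Real.sqrt (f n ^ 2)) atTop (nhds (Real.sqrt 0)) :=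
    (Real.continuous_sqrt.tendsto 0).comp h
  have h2 : (fun n => Real.sqrt (f n ^ 2)) = f := by
    funext n; rw [Real.sqrt_sq (hf n)]
  rw [h2, Real.sqrt_zero] at h1
  exact h1

lemma hm_strict_point (q r m' : E) (a b : ℝ) (ha : 0 ≤ a) (hb : 0 ≤ b) (hab : a + b = 1)
    (h1 : ‖m' - q‖ ≤ b * ‖q - r‖) (h2 : ‖m' - r‖ ≤ a * ‖q - r‖) :
    m' = a • q + b • r := by
  set X := m' - q with hX
  set Y := m' - r with hY
  set d := ‖q - r‖ with hdd
  have hd0 : 0 ≤ d := norm_nonneg _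
  have hXY : X - Y = r - q := by rw [hX, hY]; abel
  have hinner : (inner ℝ X Y : ℝ) = (‖X‖ ^ 2 + ‖Y‖ ^ 2 - d ^ 2) / 2 := by
    have h0 := norm_sub_sq_real X Y
    rw [hXY] at h0
    have : ‖r - q‖ = d := by rw [hdd]; exact norm_sub_rev _ _
    rw [this] at h0
    linarith
  have hcomb : a • X + b • Y = m' - (a • q + b • r) := by
    have h0 : a • X + b • Y = (a + b) • m' - (a • q + b • r) := by
      rw [hX, hY]; module
    rw [hab, one_smul] at h0
    exact h0
  have hexp : ‖a • X + b • Y‖ ^ 2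
      = a ^ 2 * ‖X‖ ^ 2 + 2 * a * b * (inner ℝ X Y : ℝ) + b ^ 2 * ‖Y‖ ^ 2 := by
    have h0 := norm_add_sq_real (a • X) (b • Y)
    rw [norm_smul, norm_smul, real_inner_smul_left, real_inner_smul_right,
      Real.norm_eq_abs, Real.norm_eq_abs, abs_of_nonneg ha, abs_of_nonneg hb] at h0
    rw [h0]; ring
  have hX2 : ‖X‖ ^ 2 ≤ b ^ 2 * d ^ 2 := by
    have := pow_le_pow_left₀ (norm_nonneg _) h1 2
    calc ‖X‖ ^ 2 ≤ (b * d) ^ 2 := this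
      _ = b ^ 2 * d ^ 2 := by ring
  have hY2 : ‖Y‖ ^ 2 ≤ a ^ 2 * d ^ 2 := by
    have := pow_le_pow_left₀ (norm_nonneg _) h2 2
    calc ‖Y‖ ^ 2 ≤ (a * d) ^ 2 := this
      _ = a ^ 2 * d ^ 2 := by ring
  have hfinal : ‖a • X + b • Y‖ ^ 2 ≤ 0 := by
    rw [hexp, hinner]
    have e1 : a * ‖X‖ ^ 2 ≤ a * (b ^ 2 * d ^ 2) := mul_le_mul_of_nonneg_left hX2 ha
    have e2 : b * ‖Y‖ ^ 2 ≤ b * (a ^ 2 * d ^ 2) := mul_le_mul_of_nonneg_left hY2 hb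
    have key : a ^ 2 * ‖X‖ ^ 2 + 2 * a * b * ((‖X‖ ^ 2 + ‖Y‖ ^ 2 - d ^ 2) / 2)
        + b ^ 2 * ‖Y‖ ^ 2 = a * ‖X‖ ^ 2 + b * ‖Y‖ ^ 2 - a * b * d ^ 2 := by
      linear_combination (a * ‖X‖ ^ 2 + b * ‖Y‖ ^ 2) * hab
    have key2 : a * (b ^ 2 * d ^ 2) + b * (a ^ 2 * d ^ 2) - a * b * d ^ 2 = 0 := by
      linear_combination (a * b * d ^ 2) * hab
    rw [key]
    linarith [e1, e2, key2]
  have hz : ‖m' - (a • q + b • r)‖ = 0 := by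
    rw [← hcomb]
    have := norm_nonneg (a • X + b • Y)
    nlinarith
  have := norm_eq_zero.mp hz
  rwa [sub_eq_zero] at this

end mainhelpers

set_option maxHeartbeats 4000000 in
/-- Main theorem (Hilbert-space instance): under conditions (i)–(v) on the
parameter sequences, the alternating Halpern–Mann iteration converges strongly
to the metric projection of the anchor point `u` onto
`F = Fix(T) ∩ Fix(U)`. -/
theorem stmt16 {H : Type*} [NormedAddCommGroup H] [InnerProductSpace ℝ H]
    [CompleteSpace H]
    (C : Set H) (hCne : C.Nonempty) (hCclosed : IsClosed C) (hCconv : Convex ℝ C)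
    (T U : H → H) (hTmaps : Set.MapsTo T C C) (hUmaps : Set.MapsTo U C C)
    (hTne : ∀ x ∈ C, ∀ y ∈ C, ‖T x - T y‖ ≤ ‖x - y‖)
    (hUne : ∀ x ∈ C, ∀ y ∈ C, ‖U x - U y‖ ≤ ‖x - y‖)
    (hF : ∃ q ∈ C, T q = q ∧ U q = q)
    (u x₀ : H) (hu : u ∈ C) (hx₀ : x₀ ∈ C)
    (α β : ℕ → ℝ)
    (hα : ∀ n, α n ∈ Set.Icc (0 : ℝ) 1) (hβ : ∀ n, β n ∈ Set.Ioo (0 : ℝ) 1)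
    (h1 : Tendsto α atTop (nhds 0))
    (h2 : Tendsto (fun n => ∑ i ∈ Finset.range n, α i) atTop atTop)
    (h3 : Summable (fun n => |α (n + 1) - α n|))
    (h4 : Summable (fun n => |β (n + 1) - β n|))
    (h5 : 0 < Filter.liminf β Filter.atTop)
    (h6 : Filter.limsup β Filter.atTop < 1)
    (x : ℕ → H) (hx0 : x 0 = x₀)
    (hxodd : ∀ n, x (2 * n + 1) = (1 - α n) • T (x (2 * n)) + α n • u)
    (hxeven : ∀ n, x (2 * n + 2) = (1 - β n) • U (x (2 * n + 1)) + β n • x (2 * n + 1)) :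
    ∃ z, (z ∈ C ∧ T z = z ∧ U z = z) ∧
      (∀ y, (y ∈ C ∧ T y = y ∧ U y = y) → ‖u - z‖ ≤ ‖u - y‖) ∧
      Tendsto x atTop (nhds z) := by
  classical
  obtain ⟨p, hpC, hpT, hpU⟩ := hF
  have hα0 : ∀ n, 0 ≤ α n := fun n => (hα n).1
  have hα1 : ∀ n, α n ≤ 1 := fun n => (hα n).2
  have hβ0 : ∀ n, 0 ≤ β n := fun n => (hβ n).1.le
  have hβ1 : ∀ n, β n ≤ 1 := fun n => (hβ n).2.le
  set y : ℕ → H := fun n => x (2 * n) with hy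
  set v : ℕ → H := fun n => x (2 * n + 1) with hv
  have hvdef : ∀ n, v n = (1 - α n) • T (y n) + α n • u := fun n => hxodd n
  have hydef : ∀ n, y (n + 1) = (1 - β n) • U (v n) + β n • v n := by
    intro n
    have h0 := hxeven n
    have h1 : 2 * (n + 1) = 2 * n + 2 := by ring
    simp only [hy, hv, h1]
    exact h0
  set M : ℝ := max ‖x₀ - p‖ ‖u - p‖ with hM
  have hM0 : 0 ≤ M := le_trans (norm_nonneg _) (le_max_left _ _)
  have hup : ‖u - p‖ ≤ M := le_max_right _ _
  -- boundedness
  have hvstep : ∀ n, y n ∈ C → ‖y n - p‖ ≤ M → v n ∈ C ∧ ‖v n - p‖ ≤ M := by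
    intro n hC hMn
    have hT : T (y n) ∈ C := hTmaps hC
    have hTp : ‖T (y n) - p‖ ≤ M := by
      have := hTne (y n) hC p hpC
      rw [hpT] at this
      linarith
    constructor
    · rw [hvdef n]
      exact hCconv hT hu (by linarith [hα1 n]) (hα0 n) (by ring)
    · rw [hvdef n, hm_comb_sub]
      calc ‖(1 - α n) • (T (y n) - p) + α n • (u - p)‖
          ≤ (1 - α n) * ‖T (y n) - p‖ + α n * ‖u - p‖ :=
            hm_norm_comb_le (hα0 n) (hα1 n) _ _
        _ ≤ (1 - α n) * M + α n * M := by
            have e1 : (1 - α n) * ‖T (y n) - p‖ ≤ (1 - α n) * M :=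
              mul_le_mul_of_nonneg_left hTp (by linarith [hα1 n])
            have e2 : α n * ‖u - p‖ ≤ α n * M :=
              mul_le_mul_of_nonneg_left hup (hα0 n)
            linarith
        _ = M := by ring
  have hystep : ∀ n, v n ∈ C → ‖v n - p‖ ≤ M → y (n + 1) ∈ C ∧ ‖y (n + 1) - p‖ ≤ M := by
    intro n hC hMn
    have hU : U (v n) ∈ C := hUmaps hC
    have hUp : ‖U (v n) - p‖ ≤ M := by
      have := hUne (v n) hC p hpC
      rw [hpU] at this
      linarith
    constructor
    · rw [hydef n]
      exact hCconv hU hC (by linarith [hβ1 n]) (hβ0 n) (by ring)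
    · rw [hydef n, hm_comb_sub]
      calc ‖(1 - β n) • (U (v n) - p) + β n • (v n - p)‖
          ≤ (1 - β n) * ‖U (v n) - p‖ + β n * ‖v n - p‖ :=
            hm_norm_comb_le (hβ0 n) (hβ1 n) _ _
        _ ≤ (1 - β n) * M + β n * M := by
            have e1 : (1 - β n) * ‖U (v n) - p‖ ≤ (1 - β n) * M :=
              mul_le_mul_of_nonneg_left hUp (by linarith [hβ1 n])
            have e2 : β n * ‖v n - p‖ ≤ β n * M :=
              mul_le_mul_of_nonneg_left hMn (hβ0 n)
            linarith
        _ = M := by ring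
  have hyb : ∀ n, y n ∈ C ∧ ‖y n - p‖ ≤ M := by
    intro n
    induction n with
    | zero =>
      have h0 : y 0 = x₀ := by simp only [hy, Nat.mul_zero]; exact hx0
      rw [h0]
      exact ⟨hx₀, le_max_left _ _⟩
    | succ n ih =>
      have hvn := hvstep n ih.1 ih.2
      exact hystep n hvn.1 hvn.2
  have hvb : ∀ n, v n ∈ C ∧ ‖v n - p‖ ≤ M := fun n => hvstep n (hyb n).1 (hyb n).2
  have hyC : ∀ n, y n ∈ C := fun n => (hyb n).1
  have hvC : ∀ n, v n ∈ C := fun n => (hvb n).1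
  have hyM : ∀ n, ‖y n - p‖ ≤ M := fun n => (hyb n).2
  have hvM : ∀ n, ‖v n - p‖ ≤ M := fun n => (hvb n).2
  have hTyM : ∀ n, ‖T (y n) - p‖ ≤ M := by
    intro n
    have := hTne (y n) (hyC n) p hpC
    rw [hpT] at this
    linarith [hyM n]
  have hUvM : ∀ n, ‖U (v n) - p‖ ≤ M := by
    intro n
    have := hUne (v n) (hvC n) p hpC
    rw [hpU] at this
    linarith [hvM n]
  have huTy : ∀ n, ‖u - T (y n)‖ ≤ 2 * M := by
    intro n
    calc ‖u - T (y n)‖ ≤ ‖u - p‖ + ‖p - T (y n)‖ := by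
          rw [show u - T (y n) = (u - p) + (p - T (y n)) by abel]; exact norm_add_le _ _
      _ ≤ M + M := by
          have := hTyM n
          rw [norm_sub_rev] at this
          linarith
      _ = 2 * M := by ring
  have hvUv : ∀ n, ‖v n - U (v n)‖ ≤ 2 * M := by
    intro n
    calc ‖v n - U (v n)‖ ≤ ‖v n - p‖ + ‖p - U (v n)‖ := by
          rw [show v n - U (v n) = (v n - p) + (p - U (v n)) by abel]; exact norm_add_le _ _
      _ ≤ M + M := by
          have := hUvM n
          rw [norm_sub_rev] at this
          linarith [hvM n]
      _ = 2 * M := by ring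
  -- asymptotic regularity of the even subsequence
  have hvdiff : ∀ n, ‖v (n + 1) - v n‖
      ≤ (1 - α (n + 1)) * ‖y (n + 1) - y n‖ + |α (n + 1) - α n| * (2 * M) := by
    intro n
    have hid : v (n + 1) - v n
        = (1 - α (n + 1)) • (T (y (n + 1)) - T (y n)) + (α (n + 1) - α n) • (u - T (y n)) := by
      rw [hvdef (n + 1), hvdef n]; module
    rw [hid]
    calc ‖(1 - α (n + 1)) • (T (y (n + 1)) - T (y n)) + (α (n + 1) - α n) • (u - T (y n))‖
        ≤ ‖(1 - α (n + 1)) • (T (y (n + 1)) - T (y n))‖ + ‖(α (n + 1) - α n) • (u - T (y n))‖ :=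
          norm_add_le _ _
      _ = (1 - α (n + 1)) * ‖T (y (n + 1)) - T (y n)‖ + |α (n + 1) - α n| * ‖u - T (y n)‖ := by
          rw [norm_smul, norm_smul, Real.norm_eq_abs, Real.norm_eq_abs,
            abs_of_nonneg (by linarith [hα1 (n + 1)] : (0:ℝ) ≤ 1 - α (n + 1))]
      _ ≤ (1 - α (n + 1)) * ‖y (n + 1) - y n‖ + |α (n + 1) - α n| * (2 * M) := by
          have e1 : (1 - α (n + 1)) * ‖T (y (n + 1)) - T (y n)‖
              ≤ (1 - α (n + 1)) * ‖y (n + 1) - y n‖ :=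
            mul_le_mul_of_nonneg_left (hTne _ (hyC (n + 1)) _ (hyC n))
              (by linarith [hα1 (n + 1)])
          have e2 : |α (n + 1) - α n| * ‖u - T (y n)‖ ≤ |α (n + 1) - α n| * (2 * M) :=
            mul_le_mul_of_nonneg_left (huTy n) (abs_nonneg _)
          linarith
  have hydiff : ∀ n, ‖y (n + 2) - y (n + 1)‖
      ≤ ‖v (n + 1) - v n‖ + |β (n + 1) - β n| * (2 * M) := by
    intro n
    have hid : y (n + 2) - y (n + 1)
        = (1 - β (n + 1)) • (U (v (n + 1)) - U (v n)) + β (n + 1) • (v (n + 1) - v n)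
          + (β (n + 1) - β n) • (v n - U (v n)) := by
      rw [hydef (n + 1), hydef n]; module
    rw [hid]
    have t1 : ‖(1 - β (n + 1)) • (U (v (n + 1)) - U (v n)) + β (n + 1) • (v (n + 1) - v n)
          + (β (n + 1) - β n) • (v n - U (v n))‖
        ≤ ‖(1 - β (n + 1)) • (U (v (n + 1)) - U (v n))‖ + ‖β (n + 1) • (v (n + 1) - v n)‖
          + ‖(β (n + 1) - β n) • (v n - U (v n))‖ :=
      norm_add₃_le
    have e1 : ‖(1 - β (n + 1)) • (U (v (n + 1)) - U (v n))‖
        ≤ (1 - β (n + 1)) * ‖v (n + 1) - v n‖ := by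
      rw [norm_smul, Real.norm_eq_abs, abs_of_nonneg (by linarith [hβ1 (n + 1)] : (0:ℝ) ≤ 1 - β (n + 1))]
      exact mul_le_mul_of_nonneg_left (hUne _ (hvC (n + 1)) _ (hvC n))
        (by linarith [hβ1 (n + 1)])
    have e2 : ‖β (n + 1) • (v (n + 1) - v n)‖ = β (n + 1) * ‖v (n + 1) - v n‖ := by
      rw [norm_smul, Real.norm_eq_abs, abs_of_nonneg (hβ0 (n + 1))]
    have e3 : ‖(β (n + 1) - β n) • (v n - U (v n))‖ ≤ |β (n + 1) - β n| * (2 * M) := by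
      rw [norm_smul, Real.norm_eq_abs]
      exact mul_le_mul_of_nonneg_left (hvUv n) (abs_nonneg _)
    have := hβ1 (n + 1)
    nlinarith [t1, e1, e2, e3, norm_nonneg (v (n + 1) - v n)]
  have hArec : ∀ n, ‖y (n + 1 + 1) - y (n + 1)‖
      ≤ (1 - α (n + 1)) * ‖y (n + 1) - y n‖ + (1 - α (n + 1)) * 0
        + (|α (n + 1) - α n| * (2 * M) + |β (n + 1) - β n| * (2 * M)) := by
    intro n
    have := hydiff n
    have := hvdiff n
    have h0 : (n + 1 + 1) = n + 2 := by ring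
    rw [h0]
    linarith
  have hA : Tendsto (fun n => ‖y (n + 1) - y n‖) atTop (nhds 0) := by
    apply hm_xu (fun n => ‖y (n + 1) - y n‖) (fun n => α (n + 1)) (fun _ => 0)
      (fun n => |α (n + 1) - α n| * (2 * M) + |β (n + 1) - β n| * (2 * M))
      (fun n => norm_nonneg _) (fun n => hα0 _) (fun n => hα1 _)
      (fun n => by positivity)
      (fun n => by have := hArec n; simpa using this)
      ?_ (fun ε hε => Eventually.of_forall fun n => le_of_lt hε)
      ((h3.mul_right (2 * M)).add (h4.mul_right (2 * M)))
    have hfun : ∀ n : ℕ, ∑ i ∈ Finset.range n, α (i + 1)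
        = (∑ i ∈ Finset.range (n + 1), α i) - α 0 := by
      intro n
      rw [Finset.sum_range_succ']
      ring
    simp only [hfun]
    apply tendsto_atTop_add_const_right
    exact h2.comp (tendsto_add_atTop_nat 1)
  -- eventual bounds on β
  set b0 : ℝ := liminf β atTop / 2 with hb0
  set B0 : ℝ := (limsup β atTop + 1) / 2 with hB0
  have hβbb : IsBoundedUnder (· ≥ ·) atTop β :=
    ⟨0, by rw [eventually_map]; exact Eventually.of_forall fun n => hβ0 n⟩
  have hβba : IsBoundedUnder (· ≤ ·) atTop β :=
    ⟨1, by rw [eventually_map]; exact Eventually.of_forall fun n => hβ1 n⟩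
  have hb0pos : 0 < b0 := by rw [hb0]; linarith
  have hB0lt : B0 < 1 := by rw [hB0]; linarith
  have hevlo : ∀ᶠ n in atTop, b0 < β n :=
    eventually_lt_of_lt_liminf (by rw [hb0]; linarith) hβbb
  have hevhi : ∀ᶠ n in atTop, β n < B0 :=
    eventually_lt_of_limsup_lt (by rw [hB0]; linarith) hβba
  -- difference of squared distances tends to zero
  have hDlim : Tendsto (fun n => ‖y n - p‖ ^ 2 - ‖y (n + 1) - p‖ ^ 2) atTop (nhds 0) := by
    have hgl : Tendsto (fun n => ‖y (n + 1) - y n‖ * (2 * M)) atTop (nhds 0) := by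
      simpa using hA.mul_const (2 * M)
    refine squeeze_zero_norm (fun n => ?_) hgl
    · have e1 : |‖y n - p‖ - ‖y (n + 1) - p‖| ≤ ‖y (n + 1) - y n‖ := by
        have := abs_norm_sub_norm_le (y n - p) (y (n + 1) - p)
        rw [show y n - p - (y (n + 1) - p) = y n - y (n + 1) by abel] at this
        rw [norm_sub_rev (y (n+1)) (y n)]
        exact this
      have e2 : ‖y n - p‖ + ‖y (n + 1) - p‖ ≤ 2 * M := by
        linarith [hyM n, hyM (n + 1)]
      have e3 : ‖y n - p‖ ^ 2 - ‖y (n + 1) - p‖ ^ 2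
          = (‖y n - p‖ - ‖y (n + 1) - p‖) * (‖y n - p‖ + ‖y (n + 1) - p‖) := by ring
      rw [Real.norm_eq_abs, e3, abs_mul]
      have e4 : |‖y n - p‖ + ‖y (n + 1) - p‖| ≤ 2 * M := by
        rw [abs_of_nonneg (by positivity)]
        exact e2
      exact mul_le_mul e1 e4 (abs_nonneg _) (norm_nonneg _)
  -- ‖U (v n) - v n‖ → 0
  have hmann : ∀ n, β n * (1 - β n) * ‖U (v n) - v n‖ ^ 2
      ≤ ‖v n - p‖ ^ 2 - ‖y (n + 1) - p‖ ^ 2 := by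
    intro n
    have hid : y (n + 1) - p = (1 - β n) • (U (v n) - p) + β n • (v n - p) := by
      rw [hydef n]; module
    have hexp := hm_mann_identity (hβ0 n) (hβ1 n) (U (v n) - p) (v n - p)
    rw [← hid] at hexp
    have hUvp : ‖U (v n) - p‖ ≤ ‖v n - p‖ := by
      have := hUne (v n) (hvC n) p hpC
      rw [hpU] at this
      exact this
    have hsq : ‖U (v n) - p‖ ^ 2 ≤ ‖v n - p‖ ^ 2 :=
      pow_le_pow_left₀ (norm_nonneg _) hUvp 2
    have hsub : U (v n) - p - (v n - p) = U (v n) - v n := by abel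
    rw [hsub] at hexp
    have hβn1 := hβ1 n
    nlinarith [hexp, hsq, sq_nonneg ‖y (n+1) - p‖, hβ0 n]
  have hvyp : ∀ n, ‖v n - p‖ ^ 2 ≤ ‖y n - p‖ ^ 2 + α n * (3 * M ^ 2) := by
    intro n
    have hle : ‖v n - p‖ ≤ (1 - α n) * ‖y n - p‖ + α n * M := by
      rw [hvdef n, hm_comb_sub]
      calc ‖(1 - α n) • (T (y n) - p) + α n • (u - p)‖
          ≤ (1 - α n) * ‖T (y n) - p‖ + α n * ‖u - p‖ := hm_norm_comb_le (hα0 n) (hα1 n) _ _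
        _ ≤ (1 - α n) * ‖y n - p‖ + α n * M := by
            have hT : ‖T (y n) - p‖ ≤ ‖y n - p‖ := by
              have := hTne (y n) (hyC n) p hpC
              rw [hpT] at this
              exact this
            have e1 : (1 - α n) * ‖T (y n) - p‖ ≤ (1 - α n) * ‖y n - p‖ :=
              mul_le_mul_of_nonneg_left hT (by linarith [hα1 n])
            have e2 : α n * ‖u - p‖ ≤ α n * M := mul_le_mul_of_nonneg_left hup (hα0 n)
            linarith
    have hsq : ‖v n - p‖ ^ 2 ≤ ((1 - α n) * ‖y n - p‖ + α n * M) ^ 2 :=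
      pow_le_pow_left₀ (norm_nonneg _) hle 2
    set A : ℝ := ‖y n - p‖ with hAdef
    have hA0 : 0 ≤ A := norm_nonneg _
    have hA1 : A ≤ M := hyM n
    have hexpand : ((1 - α n) * A + α n * M) ^ 2
        = A ^ 2 + 2 * α n * (A * (M - A)) + (α n) ^ 2 * (M - A) ^ 2 := by ring
    have e2 : A * (M - A) ≤ M * M :=
      mul_le_mul hA1 (by linarith) (by linarith) hM0
    have e3 : (M - A) ^ 2 ≤ M * M := by
      have e31 : M - A ≤ M := by linarith
      have e32 : (0:ℝ) ≤ M - A := by linarith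
      calc (M - A) ^ 2 ≤ M ^ 2 := pow_le_pow_left₀ e32 e31 2
        _ = M * M := pow_two M
    have t1 : 2 * α n * (A * (M - A)) ≤ 2 * α n * (M * M) :=
      mul_le_mul_of_nonneg_left e2 (by linarith [hα0 n])
    have hα2 : (α n) ^ 2 ≤ α n := by
      calc (α n) ^ 2 = α n * α n := pow_two (α n)
        _ ≤ 1 * α n := mul_le_mul_of_nonneg_right (hα1 n) (hα0 n)
        _ = α n := one_mul _
    have t2 : (α n) ^ 2 * (M - A) ^ 2 ≤ α n * (M * M) :=
      mul_le_mul hα2 e3 (sq_nonneg _) (hα0 n)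
    linarith [hsq, hexpand, t1, t2]
  have hUv0 : Tendsto (fun n => ‖U (v n) - v n‖) atTop (nhds 0) := by
    apply hm_sq_to_self _ (fun n => norm_nonneg _)
    have hnum : Tendsto (fun n => (‖y n - p‖ ^ 2 - ‖y (n + 1) - p‖ ^ 2 + α n * (3 * M ^ 2))
        / (b0 * (1 - B0))) atTop (nhds 0) := by
      have := (hDlim.add (h1.mul_const (3 * M ^ 2))).div_const (b0 * (1 - B0))
      simpa using this
    apply squeeze_zero' (Eventually.of_forall fun n => sq_nonneg _) _ hnum
    filter_upwards [hevlo, hevhi] with n hlo hhi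
    have hfac : b0 * (1 - B0) ≤ β n * (1 - β n) := by
      apply mul_le_mul hlo.le (by linarith) (by linarith) (hβ0 n)
    have hfacpos : 0 < b0 * (1 - B0) := mul_pos hb0pos (by linarith)
    have hup2 := hmann n
    have hup3 := hvyp n
    rw [le_div_iff₀ hfacpos]
    calc ‖U (v n) - v n‖ ^ 2 * (b0 * (1 - B0)) ≤ β n * (1 - β n) * ‖U (v n) - v n‖ ^ 2 := by
          have := sq_nonneg ‖U (v n) - v n‖
          nlinarith [hfac]
      _ ≤ ‖y n - p‖ ^ 2 - ‖y (n + 1) - p‖ ^ 2 + α n * (3 * M ^ 2) := by linarith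
  -- more regularity
  have hvTy : Tendsto (fun n => ‖v n - T (y n)‖) atTop (nhds 0) := by
    have hlim : Tendsto (fun n => α n * (2 * M)) atTop (nhds 0) := by
      simpa using h1.mul_const (2 * M)
    refine squeeze_zero (fun n => norm_nonneg _) (fun n => ?_) hlim
    have hid : v n - T (y n) = α n • (u - T (y n)) := by
      rw [hvdef n]; module
    rw [hid, norm_smul, Real.norm_eq_abs, abs_of_nonneg (hα0 n)]
    exact mul_le_mul_of_nonneg_left (huTy n) (hα0 n)
  have hy1v : ∀ n, ‖y (n + 1) - v n‖ ≤ ‖U (v n) - v n‖ := by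
    intro n
    have hid : y (n + 1) - v n = (1 - β n) • (U (v n) - v n) := by
      rw [hydef n]; module
    rw [hid, norm_smul, Real.norm_eq_abs,
      abs_of_nonneg (by linarith [hβ1 n] : (0:ℝ) ≤ 1 - β n)]
    have := norm_nonneg (U (v n) - v n)
    nlinarith [hβ0 n]
  have hyv : Tendsto (fun n => ‖y n - v n‖) atTop (nhds 0) := by
    have hlim : Tendsto (fun n => ‖y (n + 1) - y n‖ + ‖U (v n) - v n‖) atTop (nhds 0) := by
      simpa using hA.add hUv0
    refine squeeze_zero (fun n => norm_nonneg _) (fun n => ?_) hlim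
    calc ‖y n - v n‖ ≤ ‖y n - y (n + 1)‖ + ‖y (n + 1) - v n‖ := by
          rw [show y n - v n = (y n - y (n + 1)) + (y (n + 1) - v n) by abel]
          exact norm_add_le _ _
      _ ≤ ‖y (n + 1) - y n‖ + ‖U (v n) - v n‖ := by
          rw [norm_sub_rev (y n)]
          linarith [hy1v n]
  have hyT : Tendsto (fun n => ‖y n - T (y n)‖) atTop (nhds 0) := by
    have hlim : Tendsto (fun n => ‖y n - v n‖ + ‖v n - T (y n)‖) atTop (nhds 0) := by
      simpa using hyv.add hvTy
    refine squeeze_zero (fun n => norm_nonneg _) (fun n => ?_) hlim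
    rw [show y n - T (y n) = (y n - v n) + (v n - T (y n)) by abel]
    exact norm_add_le _ _
  have hyU : Tendsto (fun n => ‖y n - U (y n)‖) atTop (nhds 0) := by
    have hlim : Tendsto (fun n => ‖y n - v n‖ + ‖U (v n) - v n‖ + ‖y n - v n‖) atTop
        (nhds 0) := by
      simpa using (hyv.add hUv0).add hyv
    refine squeeze_zero (fun n => norm_nonneg _) (fun n => ?_) hlim
    calc ‖y n - U (y n)‖
        ≤ ‖y n - v n‖ + ‖v n - U (v n)‖ + ‖U (v n) - U (y n)‖ := by
          rw [show y n - U (y n) = (y n - v n) + (v n - U (v n)) + (U (v n) - U (y n)) by abel]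
          exact norm_add₃_le
      _ ≤ ‖y n - v n‖ + ‖U (v n) - v n‖ + ‖y n - v n‖ := by
          have e1 : ‖U (v n) - U (y n)‖ ≤ ‖v n - y n‖ := hUne _ (hvC n) _ (hyC n)
          rw [norm_sub_rev (v n) (U (v n))]
          rw [norm_sub_rev (v n) (y n)] at e1
          linarith
  -- the fixed point set
  set Fs : Set H := {q | q ∈ C ∧ T q = q ∧ U q = q} with hFs
  have hpF : p ∈ Fs := ⟨hpC, hpT, hpU⟩
  have hFclosed : IsClosed Fs := by
    apply IsSeqClosed.isClosed
    intro f q hf hfq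
    have hqC : q ∈ C := hCclosed.mem_of_tendsto hfq (Eventually.of_forall fun n => (hf n).1)
    have hkey : ∀ (S : H → H), (∀ a ∈ C, ∀ b ∈ C, ‖S a - S b‖ ≤ ‖a - b‖) →
        (∀ n, S (f n) = f n) → S q = q := by
      intro S hSne hSf
      have hb : ∀ n, ‖S q - q‖ ≤ 2 * ‖q - f n‖ := by
        intro n
        calc ‖S q - q‖ ≤ ‖S q - S (f n)‖ + ‖S (f n) - q‖ := by
              rw [show S q - q = (S q - S (f n)) + (S (f n) - q) by abel]
              exact norm_add_le _ _
          _ ≤ ‖q - f n‖ + ‖f n - q‖ := by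
              have e1 := hSne q hqC (f n) (hf n).1
              rw [hSf n] at e1 ⊢
              linarith
          _ = 2 * ‖q - f n‖ := by rw [norm_sub_rev (f n) q]; ring
      have hlim : Tendsto (fun n => 2 * ‖q - f n‖) atTop (nhds 0) := by
        have hd : Tendsto (fun n => ‖q - f n‖) atTop (nhds 0) := by
          have := (tendsto_iff_norm_sub_tendsto_zero.mp hfq)
          simpa [norm_sub_rev] using this
        simpa using hd.const_mul 2
      have h0 : ‖S q - q‖ ≤ 0 := ge_of_tendsto hlim (Eventually.of_forall hb)
      have h1 : ‖S q - q‖ = 0 := le_antisymm h0 (norm_nonneg _)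
      have h2 := norm_eq_zero.mp h1
      rwa [sub_eq_zero] at h2
    exact ⟨hqC, hkey T hTne (fun n => (hf n).2.1), hkey U hUne (fun n => (hf n).2.2)⟩
  have hFconv : Convex ℝ Fs := by
    intro q hq r hr a b ha hb hab
    have hqr : a • q + b • r ∈ C := hCconv hq.1 hr.1 ha hb hab
    have hkey : ∀ (S : H → H), (∀ a' ∈ C, ∀ b' ∈ C, ‖S a' - S b'‖ ≤ ‖a' - b'‖) →
        S q = q → S r = r → S (a • q + b • r) = a • q + b • r := by
      intro S hSne hSq hSr
      set m := a • q + b • r with hm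
      have hd1 : ‖m - q‖ ≤ b * ‖q - r‖ := by
        have hid : m - q = b • (r - q) := by
          rw [hm]
          have e0 : a • q + b • r - q = (a - 1) • q + b • r := by module
          rw [e0, show a - 1 = -b by linarith]
          module
        rw [hid, norm_smul, Real.norm_eq_abs, abs_of_nonneg hb, norm_sub_rev r q]
      have hd2 : ‖m - r‖ ≤ a * ‖q - r‖ := by
        have hid : m - r = a • (q - r) := by
          rw [hm]
          have e0 : a • q + b • r - r = a • q + (b - 1) • r := by module
          rw [e0, show b - 1 = -a by linarith]
          module
        rw [hid, norm_smul, Real.norm_eq_abs, abs_of_nonneg ha]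
      have h1' : ‖S m - q‖ ≤ b * ‖q - r‖ := by
        have := hSne m hqr q hq.1
        rw [hSq] at this
        exact le_trans this hd1
      have h2' : ‖S m - r‖ ≤ a * ‖q - r‖ := by
        have := hSne m hqr r hr.1
        rw [hSr] at this
        exact le_trans this hd2
      exact hm_strict_point q r (S m) a b ha hb hab h1' h2'
    exact ⟨hqr, hkey T hTne hq.2.1 hr.2.1, hkey U hUne hq.2.2 hr.2.2⟩
  -- the projection z of u onto Fs
  obtain ⟨z, hzF, hzmin⟩ :=
    exists_norm_eq_iInf_of_complete_convex ⟨p, hpF⟩ hFclosed.isComplete hFconv u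
  have hvar : ∀ q ∈ Fs, (inner ℝ (u - z) (q - z) : ℝ) ≤ 0 :=
    (norm_eq_iInf_iff_real_inner_le_zero hFconv hzF).mp hzmin
  have hzC : z ∈ C := hzF.1
  have hzT : T z = z := hzF.2.1
  have hzU : U z = z := hzF.2.2
  have hmin : ∀ q, (q ∈ C ∧ T q = q ∧ U q = q) → ‖u - z‖ ≤ ‖u - q‖ := by
    intro q hq
    rw [hzmin]
    have hbdd : BddBelow (Set.range fun w : ↥Fs => ‖u - (w:H)‖) := by
      refine ⟨0, ?_⟩
      rintro r ⟨w, rfl⟩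
      exact norm_nonneg _
    exact ciInf_le hbdd (⟨q, hq⟩ : ↥Fs)
  -- norm bounds
  have hyn : ∀ n, ‖y n‖ ≤ M + ‖p‖ := by
    intro n
    calc ‖y n‖ = ‖(y n - p) + p‖ := by rw [sub_add_cancel]
      _ ≤ ‖y n - p‖ + ‖p‖ := norm_add_le _ _
      _ ≤ M + ‖p‖ := by linarith [hyM n]
  -- the limsup condition
  have hs_lim : ∀ ε > 0, ∀ᶠ n in atTop, (inner ℝ (u - z) (y n - z) : ℝ) ≤ ε := by
    intro ε hε
    by_contra hcon
    rw [Filter.not_eventually] at hcon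
    have hfreq : ∃ᶠ n in atTop, ε < (inner ℝ (u - z) (y n - z) : ℝ) :=
      hcon.mono fun n h => lt_of_not_ge h
    obtain ⟨ψ, hψmono, hψ⟩ := extraction_of_frequently_atTop hfreq
    obtain ⟨w, φ, hφ, hwconv⟩ :=
      hm_weak_subseq (fun k => y (ψ k)) (M + ‖p‖) (fun k => hyn _)
    have hcomp : Tendsto (fun k => ψ (φ k)) atTop atTop :=
      (hψmono.comp hφ).tendsto_atTop
    have hYT : Tendsto (fun k => ‖y (ψ (φ k)) - T (y (ψ (φ k)))‖) atTop (nhds 0) :=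
      hyT.comp hcomp
    have hYU : Tendsto (fun k => ‖y (ψ (φ k)) - U (y (ψ (φ k)))‖) atTop (nhds 0) :=
      hyU.comp hcomp
    obtain ⟨hwC, hwT⟩ := hm_demiclosed C hCclosed hCconv T hTne
      (fun k => y (ψ (φ k))) (fun k => hyC _) w (M + ‖p‖) (fun k => hyn _)
      (fun v' => hwconv v') hYT
    obtain ⟨-, hwU⟩ := hm_demiclosed C hCclosed hCconv U hUne
      (fun k => y (ψ (φ k))) (fun k => hyC _) w (M + ‖p‖) (fun k => hyn _)
      (fun v' => hwconv v') hYU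
    have hwF : w ∈ Fs := ⟨hwC, hwT, hwU⟩
    have hlt := hvar w hwF
    have hlim : Tendsto (fun k => (inner ℝ (u - z) (y (ψ (φ k)) - z) : ℝ)) atTop
        (nhds ((inner ℝ (u - z) (w - z) : ℝ))) := by
      have h0 := (hwconv (u - z)).sub_const ((inner ℝ z (u - z) : ℝ))
      have heq : ∀ k, (inner ℝ (y (ψ (φ k))) (u - z) : ℝ) - inner ℝ z (u - z)
          = inner ℝ (u - z) (y (ψ (φ k)) - z) := by
        intro k
        rw [← inner_sub_left]
        exact real_inner_comm _ _
      have heq2 : (inner ℝ w (u - z) : ℝ) - inner ℝ z (u - z) = inner ℝ (u - z) (w - z) := by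
        rw [← inner_sub_left]
        exact real_inner_comm _ _
      rw [heq2] at h0
      have hfun : (fun k => (inner ℝ (y (ψ (φ k))) (u - z) : ℝ) - inner ℝ z (u - z))
          = fun k => (inner ℝ (u - z) (y (ψ (φ k)) - z) : ℝ) := funext heq
      rwa [hfun] at h0
    have hge : ε ≤ (inner ℝ (u - z) (w - z) : ℝ) :=
      ge_of_tendsto hlim (Eventually.of_forall fun k => (hψ (φ k)).le)
    linarith
  -- the final recursion
  set bseq : ℕ → ℝ := fun n => 2 * (1 - α n) * (inner ℝ (T (y n) - z) (u - z) : ℝ)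
    + α n * ‖u - z‖ ^ 2 with hbseq
  have hzM : ∀ n, ‖T (y n) - z‖ ≤ ‖y n - z‖ := by
    intro n
    have := hTne (y n) (hyC n) z hzC
    rwa [hzT] at this
  have hrecz : ∀ n, ‖y (n + 1) - z‖ ^ 2 ≤ (1 - α n) * ‖y n - z‖ ^ 2 + α n * bseq n := by
    intro n
    have hUz : ‖U (v n) - z‖ ≤ ‖v n - z‖ := by
      have := hUne (v n) (hvC n) z hzC
      rwa [hzU] at this
    have h1' : ‖y (n + 1) - z‖ ≤ ‖v n - z‖ := by
      rw [hydef n, hm_comb_sub]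
      calc ‖(1 - β n) • (U (v n) - z) + β n • (v n - z)‖
          ≤ (1 - β n) * ‖U (v n) - z‖ + β n * ‖v n - z‖ :=
            hm_norm_comb_le (hβ0 n) (hβ1 n) _ _
        _ ≤ ‖v n - z‖ := by
            have e1 : (1 - β n) * ‖U (v n) - z‖ ≤ (1 - β n) * ‖v n - z‖ :=
              mul_le_mul_of_nonneg_left hUz (by linarith [hβ1 n])
            nlinarith [hβ0 n, hβ1 n, norm_nonneg (v n - z)]
    have h2' : ‖v n - z‖ ^ 2 = (1 - α n) ^ 2 * ‖T (y n) - z‖ ^ 2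
        + 2 * α n * (1 - α n) * (inner ℝ (T (y n) - z) (u - z) : ℝ)
        + α n ^ 2 * ‖u - z‖ ^ 2 := by
      have hid : v n - z = (1 - α n) • (T (y n) - z) + α n • (u - z) := by
        rw [hvdef n]; module
      rw [hid]
      exact hm_norm_comb_sq (hα0 n) (hα1 n) _ _
    have h3' : ‖y (n + 1) - z‖ ^ 2 ≤ ‖v n - z‖ ^ 2 :=
      pow_le_pow_left₀ (norm_nonneg _) h1' 2
    have h4' : ‖T (y n) - z‖ ^ 2 ≤ ‖y n - z‖ ^ 2 :=
      pow_le_pow_left₀ (norm_nonneg _) (hzM n) 2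
    have e5 : (1 - α n) ^ 2 * ‖T (y n) - z‖ ^ 2 ≤ (1 - α n) * ‖y n - z‖ ^ 2 := by
      have e51 : (1 - α n) ^ 2 ≤ (1 - α n) := by nlinarith [hα0 n, hα1 n]
      calc (1 - α n) ^ 2 * ‖T (y n) - z‖ ^ 2 ≤ (1 - α n) ^ 2 * ‖y n - z‖ ^ 2 :=
            mul_le_mul_of_nonneg_left h4' (sq_nonneg _)
        _ ≤ (1 - α n) * ‖y n - z‖ ^ 2 :=
            mul_le_mul_of_nonneg_right e51 (sq_nonneg _)
    simp only [hbseq]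
    nlinarith [h3', h2', e5]
  have hbev : ∀ ε > 0, ∀ᶠ n in atTop, bseq n ≤ ε := by
    intro ε hε
    have hε6 : 0 < ε / 6 := by linarith
    have hE2 : ∀ᶠ n in atTop, ‖y n - T (y n)‖ * ‖u - z‖ < ε / 6 :=
      (hyT.mul_const ‖u - z‖).eventually (by simpa using eventually_lt_nhds hε6)
    have hE3 : ∀ᶠ n in atTop, α n * ‖u - z‖ ^ 2 < ε / 3 :=
      (h1.mul_const (‖u - z‖ ^ 2)).eventually (by simpa using eventually_lt_nhds (by linarith : (0:ℝ) < ε / 3))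
    filter_upwards [hs_lim (ε / 6) hε6, hE2, hE3] with n hsn he2 he3
    have hIdec : (inner ℝ (T (y n) - z) (u - z) : ℝ)
        = inner ℝ (u - z) (y n - z) + inner ℝ (T (y n) - y n) (u - z) := by
      have e0 : (inner ℝ (T (y n) - z) (u - z) : ℝ)
          = inner ℝ (y n - z) (u - z) + inner ℝ (T (y n) - y n) (u - z) := by
        rw [← inner_add_left]
        congr 1
        abel
      rw [e0, real_inner_comm (y n - z)]
    have habs : (inner ℝ (T (y n) - y n) (u - z) : ℝ) ≤ ε / 6 := by
      have := abs_real_inner_le_norm (T (y n) - y n) (u - z)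
      have e0 : ‖T (y n) - y n‖ = ‖y n - T (y n)‖ := norm_sub_rev _ _
      rw [e0] at this
      have := le_trans (le_abs_self _) this
      linarith
    have hI : (inner ℝ (T (y n) - z) (u - z) : ℝ) ≤ ε / 3 := by
      rw [hIdec]
      linarith
    have h1α : (0:ℝ) ≤ 1 - α n := by linarith [hα1 n]
    have hmul : (1 - α n) * (inner ℝ (T (y n) - z) (u - z) : ℝ) ≤ ε / 3 := by
      calc (1 - α n) * (inner ℝ (T (y n) - z) (u - z) : ℝ) ≤ (1 - α n) * (ε / 3) :=
            mul_le_mul_of_nonneg_left hI h1α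
        _ ≤ 1 * (ε / 3) := mul_le_mul_of_nonneg_right (by linarith [hα0 n]) (by linarith)
        _ = ε / 3 := one_mul _
    simp only [hbseq]
    linarith
  have haz : Tendsto (fun n => ‖y n - z‖ ^ 2) atTop (nhds 0) := by
    apply hm_xu (fun n => ‖y n - z‖ ^ 2) α bseq (fun _ => 0)
      (fun n => sq_nonneg _) hα0 hα1 (fun n => le_refl 0)
      (fun n => by simpa using hrecz n) h2 hbev summable_zero
  have hyz : Tendsto y atTop (nhds z) := by
    rw [tendsto_iff_norm_sub_tendsto_zero]
    exact hm_sq_to_self _ (fun n => norm_nonneg _) haz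
  have hvz : Tendsto v atTop (nhds z) := by
    rw [tendsto_iff_norm_sub_tendsto_zero]
    have hyz' : Tendsto (fun n => ‖y n - z‖) atTop (nhds 0) :=
      hm_sq_to_self _ (fun n => norm_nonneg _) haz
    have hlim : Tendsto (fun n => ‖y n - v n‖ + ‖y n - z‖) atTop (nhds 0) := by
      simpa using hyv.add hyz'
    refine squeeze_zero (fun n => norm_nonneg _) (fun n => ?_) hlim
    calc ‖v n - z‖ ≤ ‖v n - y n‖ + ‖y n - z‖ := by
          rw [show v n - z = (v n - y n) + (y n - z) by abel]
          exact norm_add_le _ _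
      _ = ‖y n - v n‖ + ‖y n - z‖ := by rw [norm_sub_rev]
  have hyz2 : Tendsto (fun n => x (2 * n)) atTop (nhds z) := by
    rw [hy] at hyz
    exact hyz
  have hvz2 : Tendsto (fun n => x (2 * n + 1)) atTop (nhds z) := by
    rw [hv] at hvz
    exact hvz
  exact ⟨z, ⟨hzC, hzT, hzU⟩, hmin, hm_interleave x z hyz2 hvz2⟩
end

section
/- Let H be a real Hilbert space, C ⊆ H a nonempty convex subset, T : C → C a nonexpansive map with a fixed point p, (α_n) ⊂ [0,1], and y₀, u ∈ C. Let (y_n) be the Halpern iteration y_{n+1} = (1 − α_n)·T(y_n) + α_n·u with y_0 = y₀. Assume Γ1 is a rate of convergence for α_n → 0, Γ2 : ℕ → ℕ satisfies ∑_{i=0}^{Γ2(k)} α_i ≥ k for all k, and Γ3 is a Cauchy rate for ∑|α_{n+1} − α_n|. Let N ∈ ℕ, N ≥ 1, with N ≥ max{‖y₀ − p‖, 2‖u − p‖}. Then: (a) for all ε > 0 and all n ≥ θ(ε), ‖y_{n+1} − y_n‖ ≤ ε, where θ(ε) := A(V(ε/2) + ⌈ln(4N/ε)⌉ + 1) + 1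 with A(k) := Γ2(k+1) and V(ε) := Γ3(2ε/(3N)); and (b) for all ε > 0 and all n ≥ ρ̃(ε), ‖T(y_n) − y_n‖ ≤ ε, where ρ̃(ε) := max{ θ(ε/2), Γ1(ε/(3N)) }. -/
/-- `θ(ε) := A(V(ε/2) + ⌈ln(4N/ε)⌉ + 1) + 1`, with `A(k) := Γ2(k+1)` and
`V(ε) := Γ3(2ε/(3N))`. -/
noncomputable def thetaH (Γ2 : ℕ → ℕ) (Γ3 : ℝ → ℕ) (N : ℕ) (ε : ℝ) : ℕ :=
  Γ2 (Γ3 (2 * (ε / 2) / (3 * (N : ℝ))) + ⌈Real.log (4 * (N : ℝ) / ε)⌉₊ + 1 + 1) + 1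

/-- `ρ̃(ε) := max{θ(ε/2), Γ1(ε/(3N))}`. -/
noncomputable def rhoH (Γ1 : ℝ → ℕ) (Γ2 : ℕ → ℕ) (Γ3 : ℝ → ℕ) (N : ℕ) (ε : ℝ) : ℕ :=
  max (thetaH Γ2 Γ3 N (ε / 2)) (Γ1 (ε / (3 * (N : ℝ))))

/-- Rates of asymptotic regularity for the Halpern iteration in a Hilbert
space: `θ` for `‖y_{n+1} - y_n‖ → 0` and `ρ̃` for `‖T(y_n) - y_n‖ → 0`. -/
theorem stmt17 {H : Type*} [NormedAddCommGroup H] [InnerProductSpace ℝ H]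
    (C : Set H) (hCne : C.Nonempty) (hCconv : Convex ℝ C)
    (T : H → H) (hTmaps : Set.MapsTo T C C)
    (hTne : ∀ x ∈ C, ∀ y ∈ C, ‖T x - T y‖ ≤ ‖x - y‖)
    (p : H) (hp : p ∈ C) (hTp : T p = p)
    (α : ℕ → ℝ) (hα : ∀ n, α n ∈ Set.Icc (0 : ℝ) 1)
    (y₀ u : H) (hy₀ : y₀ ∈ C) (hu : u ∈ C)
    (y : ℕ → H) (hy0 : y 0 = y₀)
    (hyrec : ∀ n, y (n + 1) = (1 - α n) • T (y n) + α n • u)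
    (Γ1 : ℝ → ℕ) (Γ2 : ℕ → ℕ) (Γ3 : ℝ → ℕ)
    (hΓ1 : ∀ ε : ℝ, 0 < ε → ∀ n ≥ Γ1 ε, |α n| ≤ ε)
    (hΓ2 : ∀ k : ℕ, (k : ℝ) ≤ ∑ i ∈ Finset.range (Γ2 k + 1), α i)
    (hΓ3 : ∀ ε : ℝ, 0 < ε → ∀ n : ℕ,
      ∑ i ∈ Finset.Icc (Γ3 ε + 1) (Γ3 ε + n), |α (i + 1) - α i| ≤ ε)
    (N : ℕ) (hN1 : 1 ≤ N)
    (hN : max ‖y₀ - p‖ (2 * ‖u - p‖) ≤ (N : ℝ)) :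
    ∀ ε : ℝ, 0 < ε →
      (∀ n ≥ thetaH Γ2 Γ3 N ε, ‖y (n + 1) - y n‖ ≤ ε) ∧
      (∀ n ≥ rhoH Γ1 Γ2 Γ3 N ε, ‖T (y n) - y n‖ ≤ ε) := by
  have hNpos : (0:ℝ) < (N:ℝ) := by exact_mod_cast hN1
  have hy0N : ‖y₀ - p‖ ≤ (N:ℝ) := le_trans (le_max_left _ _) hN
  have huN : ‖u - p‖ ≤ (N:ℝ)/2 := by
    have := le_trans (le_max_right _ _) hN; linarith
  have hmem : ∀ n, y n ∈ C := by
    intro n; induction n with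
    | zero => rw [hy0]; exact hy₀
    | succ n ih =>
      rw [hyrec]
      exact hCconv (hTmaps ih) hu (by linarith [(hα n).2]) (hα n).1 (by ring)
  have hbnd : ∀ n, ‖y n - p‖ ≤ (N:ℝ) := by
    intro n; induction n with
    | zero => rw [hy0]; exact hy0N
    | succ n ih =>
      have hT : ‖T (y n) - p‖ ≤ (N:ℝ) := by
        calc ‖T (y n) - p‖ = ‖T (y n) - T p‖ := by rw [hTp]
          _ ≤ ‖y n - p‖ := hTne _ (hmem n) _ hp
          _ ≤ (N:ℝ) := ih
      have key : y (n+1) - p = (1 - α n) • (T (y n) - p) + α n • (u - p) := by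
        rw [hyrec]; module
      have h1a : (0:ℝ) ≤ 1 - α n := by linarith [(hα n).2]
      calc ‖y (n+1) - p‖ ≤ ‖(1 - α n) • (T (y n) - p)‖ + ‖α n • (u - p)‖ := by
            rw [key]; exact norm_add_le _ _
        _ = (1 - α n) * ‖T (y n) - p‖ + α n * ‖u - p‖ := by
            rw [norm_smul, norm_smul, Real.norm_of_nonneg h1a,
              Real.norm_of_nonneg (hα n).1]
        _ ≤ (1 - α n) * (N:ℝ) + α n * (N:ℝ) := by
            refine add_le_add (mul_le_mul_of_nonneg_left hT h1a)
              (mul_le_mul_of_nonneg_left (le_trans huN (by linarith)) (hα n).1)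
        _ = (N:ℝ) := by ring
  have huT : ∀ n, ‖u - T (y n)‖ ≤ 3*(N:ℝ)/2 := by
    intro n
    have hT : ‖T (y n) - p‖ ≤ (N:ℝ) := by
      calc ‖T (y n) - p‖ = ‖T (y n) - T p‖ := by rw [hTp]
        _ ≤ ‖y n - p‖ := hTne _ (hmem n) _ hp
        _ ≤ (N:ℝ) := hbnd n
    calc ‖u - T (y n)‖ = ‖(u - p) + (p - T (y n))‖ := by rw [show u - T (y n) = (u - p) + (p - T (y n)) from by abel]
      _ ≤ ‖u - p‖ + ‖p - T (y n)‖ := norm_add_le _ _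
      _ = ‖u - p‖ + ‖T (y n) - p‖ := by rw [norm_sub_rev p (T (y n))]
      _ ≤ (N:ℝ)/2 + (N:ℝ) := add_le_add huN hT
      _ = 3*(N:ℝ)/2 := by ring
  set b : ℕ → ℝ := fun n => ‖y (n+1) - y n‖ with hb
  set c : ℕ → ℝ := fun n => 3*(N:ℝ)/2 * |α (n+1) - α n| with hc
  have hbnonneg : ∀ n, 0 ≤ b n := fun n => norm_nonneg _
  have hcnonneg : ∀ n, 0 ≤ c n := by
    intro n; simp only [hc]; positivity
  have hb2N : ∀ n, b n ≤ 2*(N:ℝ) := by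
    intro n
    calc b n = ‖(y (n+1) - p) + (p - y n)‖ := by
          simp only [hb]
          rw [show y (n+1) - y n = (y (n+1) - p) + (p - y n) from by abel]
      _ ≤ ‖y (n+1) - p‖ + ‖p - y n‖ := norm_add_le _ _
      _ = ‖y (n+1) - p‖ + ‖y n - p‖ := by rw [norm_sub_rev p (y n)]
      _ ≤ (N:ℝ) + (N:ℝ) := add_le_add (hbnd _) (hbnd _)
      _ = 2*(N:ℝ) := by ring
  have hrec : ∀ n, b (n+1) ≤ (1 - α (n+1)) * b n + c n := by
    intro n
    have key : y (n+2) - y (n+1)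
        = (1 - α (n+1)) • (T (y (n+1)) - T (y n)) + (α (n+1) - α n) • (u - T (y n)) := by
      rw [hyrec (n+1), hyrec n]; module
    have h1a : (0:ℝ) ≤ 1 - α (n+1) := by linarith [(hα (n+1)).2]
    calc b (n+1) = ‖y (n+2) - y (n+1)‖ := rfl
      _ ≤ ‖(1 - α (n+1)) • (T (y (n+1)) - T (y n))‖ + ‖(α (n+1) - α n) • (u - T (y n))‖ := by
          rw [key]; exact norm_add_le _ _
      _ = (1 - α (n+1)) * ‖T (y (n+1)) - T (y n)‖ + |α (n+1) - α n| * ‖u - T (y n)‖ := by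
          rw [norm_smul, norm_smul, Real.norm_of_nonneg h1a, Real.norm_eq_abs]
      _ ≤ (1 - α (n+1)) * ‖y (n+1) - y n‖ + |α (n+1) - α n| * (3*(N:ℝ)/2) := by
          exact add_le_add (mul_le_mul_of_nonneg_left (hTne _ (hmem _) _ (hmem _)) h1a)
            (mul_le_mul_of_nonneg_left (huT n) (abs_nonneg _))
      _ = (1 - α (n+1)) * b n + c n := by simp only [hb, hc]; ring
  have hiter : ∀ m k, b (m+k) ≤
      Real.exp (-(∑ j ∈ Finset.range k, α (m+j+1))) * b m
        + ∑ j ∈ Finset.range k, c (m+j) := by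
    intro m k
    induction k with
    | zero => simp
    | succ k ih =>
      have hstep := hrec (m+k)
      have hexp : 1 - α (m+k+1) ≤ Real.exp (-(α (m+k+1))) := by
        have := Real.add_one_le_exp (-(α (m+k+1))); linarith
      have h1a : (0:ℝ) ≤ 1 - α (m+k+1) := by linarith [(hα (m+k+1)).2]
      have e1 : (1 - α (m+k+1)) * b (m+k) ≤ Real.exp (-(α (m+k+1))) * b (m+k) :=
        mul_le_mul_of_nonneg_right hexp (hbnonneg _)
      have e2 : Real.exp (-(α (m+k+1))) * b (m+k)
          ≤ Real.exp (-(α (m+k+1))) * (Real.exp (-(∑ j ∈ Finset.range k, α (m+j+1))) * b m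
            + ∑ j ∈ Finset.range k, c (m+j)) :=
        mul_le_mul_of_nonneg_left ih (Real.exp_nonneg _)
      have e3 : Real.exp (-(α (m+k+1))) * (∑ j ∈ Finset.range k, c (m+j))
          ≤ ∑ j ∈ Finset.range k, c (m+j) := by
        have h1 : Real.exp (-(α (m+k+1))) ≤ 1 := by
          rw [Real.exp_le_one_iff]; linarith [(hα (m+k+1)).1]
        have h2 : (0:ℝ) ≤ ∑ j ∈ Finset.range k, c (m+j) :=
          Finset.sum_nonneg (fun j _ => hcnonneg _)
        nlinarith
      have e4 : Real.exp (-(α (m+k+1))) * Real.exp (-(∑ j ∈ Finset.range k, α (m+j+1)))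
          = Real.exp (-(∑ j ∈ Finset.range (k+1), α (m+j+1))) := by
        rw [← Real.exp_add, Finset.sum_range_succ]
        congr 1; ring
      calc b (m+(k+1)) ≤ (1 - α (m+k+1)) * b (m+k) + c (m+k) := hstep
        _ ≤ Real.exp (-(α (m+k+1))) * (Real.exp (-(∑ j ∈ Finset.range k, α (m+j+1))) * b m
            + ∑ j ∈ Finset.range k, c (m+j)) + c (m+k) := by
              linarith [le_trans e1 e2]
        _ ≤ Real.exp (-(∑ j ∈ Finset.range (k+1), α (m+j+1))) * b m
            + (∑ j ∈ Finset.range k, c (m+j) + c (m+k)) := by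
              rw [mul_add, ← mul_assoc, e4]; linarith [e3]
        _ = Real.exp (-(∑ j ∈ Finset.range (k+1), α (m+j+1))) * b m
            + ∑ j ∈ Finset.range (k+1), c (m+j) := by
              rw [Finset.sum_range_succ, Finset.sum_range_succ]
  -- main θ statement
  have main : ∀ ε : ℝ, 0 < ε → ∀ n, thetaH Γ2 Γ3 N ε ≤ n → b n ≤ ε := by
    intro ε hε n hn
    set ε' : ℝ := 2 * (ε / 2) / (3 * (N : ℝ)) with hε'
    have hε'eq : ε' = ε / (3 * (N:ℝ)) := by rw [hε']; ring
    have hε'pos : 0 < ε' := by rw [hε'eq]; positivity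
    set V : ℕ := Γ3 ε' with hV
    set L : ℕ := ⌈Real.log (4 * (N : ℝ) / ε)⌉₊ with hL
    have hth : thetaH Γ2 Γ3 N ε = Γ2 (V + L + 1 + 1) + 1 := rfl
    rw [hth] at hn
    -- from hΓ2: sum over range n is at least V+L+2
    have hsum1 : ((V + L + 1 + 1 : ℕ) : ℝ) ≤ ∑ i ∈ Finset.range n, α i := by
      refine le_trans (hΓ2 (V + L + 1 + 1)) ?_
      refine Finset.sum_le_sum_of_subset_of_nonneg ?_ (fun i _ _ => (hα i).1)
      exact Finset.range_subset_range.2 (by omega)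
    have hsumn : ∑ i ∈ Finset.range n, α i ≤ (n : ℝ) := by
      calc ∑ i ∈ Finset.range n, α i ≤ ∑ i ∈ Finset.range n, (1:ℝ) :=
            Finset.sum_le_sum (fun i _ => (hα i).2)
        _ = (n:ℝ) := by simp
    have hnge : V + L + 2 ≤ n := by
      by_contra hcon
      push_neg at hcon
      have h1 : (n:ℝ) < ((V:ℝ) + (L:ℝ) + 2) := by exact_mod_cast hcon
      have h2 := le_trans hsum1 hsumn
      push_cast at h2
      linarith
    obtain ⟨k, hk⟩ : ∃ k, n = (V+1) + k := ⟨n - (V+1), by omega⟩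
    have hkge : L + 1 ≤ k := by omega
    have happly := hiter (V+1) k
    rw [← hk] at happly
    -- bound the c-sum via hΓ3
    have hcsum : ∑ j ∈ Finset.range k, c (V+1+j) ≤ ε / 2 := by
      have h3 := hΓ3 ε' hε'pos k
      have hre : ∑ i ∈ Finset.Icc (V + 1) (V + k), |α (i + 1) - α i|
          = ∑ j ∈ Finset.range k, |α (V+1+j+1) - α (V+1+j)| := by
        rw [show Finset.Icc (V+1) (V+k) = Finset.Ico (V+1) (V+k+1) by rw [Finset.Ico_add_one_right_eq_Icc]]
        rw [Finset.sum_Ico_eq_sum_range, show V+k+1-(V+1) = k by omega]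
      rw [hre] at h3
      have : ∑ j ∈ Finset.range k, c (V+1+j)
          = 3*(N:ℝ)/2 * ∑ j ∈ Finset.range k, |α (V+1+j+1) - α (V+1+j)| := by
        rw [Finset.mul_sum]
      rw [this]
      have hNne : (N:ℝ) ≠ 0 := ne_of_gt hNpos
      calc 3*(N:ℝ)/2 * ∑ j ∈ Finset.range k, |α (V+1+j+1) - α (V+1+j)|
          ≤ 3*(N:ℝ)/2 * ε' := by
            refine mul_le_mul_of_nonneg_left h3 (by positivity)
        _ = ε / 2 := by rw [hε']; field_simp
    -- bound the exp part
    have hSsum : Real.log (4 * (N : ℝ) / ε) ≤ ∑ j ∈ Finset.range k, α (V+1+j+1) := by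
      have hLlog : Real.log (4 * (N : ℝ) / ε) ≤ (L:ℝ) := Nat.le_ceil _
      have hsplit := Finset.sum_range_add α (V+2) (n-(V+2))
      rw [show (V+2) + (n-(V+2)) = n by omega] at hsplit
      have hfirst : ∑ i ∈ Finset.range (V+2), α i ≤ ((V:ℝ)+2) := by
        calc ∑ i ∈ Finset.range (V+2), α i ≤ ∑ i ∈ Finset.range (V+2), (1:ℝ) :=
              Finset.sum_le_sum (fun i _ => (hα i).2)
          _ = ((V:ℝ)+2) := by simp
      have htail : ∑ j ∈ Finset.range (n-(V+2)), α (V+2+j)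
          ≤ ∑ j ∈ Finset.range k, α (V+1+j+1) := by
        have hsub : Finset.range (n-(V+2)) ⊆ Finset.range k :=
          Finset.range_subset_range.2 (by omega)
        refine le_trans (Finset.sum_le_sum_of_subset_of_nonneg hsub
          (fun i _ _ => (hα _).1)) ?_
        exact le_of_eq (Finset.sum_congr rfl (fun j _ => by congr 1; omega))
      have hfin : ((V:ℝ) + (L:ℝ) + 1 + 1) ≤ ((V:ℝ)+2) + ∑ j ∈ Finset.range k, α (V+1+j+1) := by
        rw [hsplit] at hsum1
        push_cast at hsum1
        linarith [htail, hfirst]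
      linarith
    have hexpb : Real.exp (-(∑ j ∈ Finset.range k, α (V+1+j+1))) * b (V+1) ≤ ε / 2 := by
      have h4pos : 0 < 4 * (N : ℝ) / ε := by positivity
      have he1 : Real.exp (-(∑ j ∈ Finset.range k, α (V+1+j+1)))
          ≤ Real.exp (-(Real.log (4 * (N : ℝ) / ε))) := by
        exact Real.exp_le_exp.2 (by linarith)
      have he2 : Real.exp (-(Real.log (4 * (N : ℝ) / ε))) = ε / (4 * (N:ℝ)) := by
        rw [Real.exp_neg, Real.exp_log h4pos]
        field_simp
      calc Real.exp (-(∑ j ∈ Finset.range k, α (V+1+j+1))) * b (V+1)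
          ≤ (ε / (4 * (N:ℝ))) * (2*(N:ℝ)) := by
            refine mul_le_mul (he2 ▸ he1) (hb2N _) (hbnonneg _) (by positivity)
        _ = ε / 2 := by field_simp; ring
    calc b n ≤ Real.exp (-(∑ j ∈ Finset.range k, α (V+1+j+1))) * b (V+1)
          + ∑ j ∈ Finset.range k, c (V+1+j) := happly
      _ ≤ ε / 2 + ε / 2 := add_le_add hexpb hcsum
      _ = ε := by ring
  intro ε hε
  constructor
  · intro n hn; exact main ε hε n hn
  · intro n hn
    have hn1 : thetaH Γ2 Γ3 N (ε/2) ≤ n := le_trans (le_max_left _ _) hn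
    have hn2 : Γ1 (ε / (3 * (N:ℝ))) ≤ n := le_trans (le_max_right _ _) hn
    have hαn : |α n| ≤ ε / (3 * (N:ℝ)) := hΓ1 _ (by positivity) n hn2
    have key : y (n+1) - T (y n) = α n • (u - T (y n)) := by
      rw [hyrec]; module
    have h1 : ‖y (n+1) - T (y n)‖ ≤ ε / 2 := by
      rw [key, norm_smul, Real.norm_eq_abs]
      calc |α n| * ‖u - T (y n)‖ ≤ (ε / (3 * (N:ℝ))) * (3*(N:ℝ)/2) := by
            refine mul_le_mul hαn (huT n) (norm_nonneg _) (by positivity)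
        _ = ε / 2 := by field_simp
    have h2 : ‖y (n+1) - y n‖ ≤ ε / 2 := main (ε/2) (by positivity) n hn1
    calc ‖T (y n) - y n‖ = ‖(T (y n) - y (n+1)) + (y (n+1) - y n)‖ := by
          rw [show T (y n) - y n = (T (y n) - y (n+1)) + (y (n+1) - y n) from by abel]
      _ ≤ ‖T (y n) - y (n+1)‖ + ‖y (n+1) - y n‖ := norm_add_le _ _
      _ = ‖y (n+1) - T (y n)‖ + ‖y (n+1) - y n‖ := by rw [norm_sub_rev (T (y n)) (y (n+1))]
      _ ≤ ε/2 + ε/2 := add_le_add h1 h2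
      _ = ε := by ring
end

section
/- Let H be a real Hilbert space, C ⊆ H a nonempty convex subset, T, U : C → C nonexpansive maps, u, x₀ ∈ C, and (α_n), (β_n) ⊂ [0,1] with ∑ α_n = ∞. Let (x_n) be the alternating Halpern–Mann iteration with anchor u and starting point x₀, and let (x'_n) be a sequence in C with x'_0 = x₀ satisfying, for some nonnegative reals (δ_n): ‖x'_{2n+1} − ((1 − α_n)·T(x'_{2n}) + α_n·u)‖ ≤ δ_{2n} and ‖x'_{2n+2} − ((1 − β_n)·U(x'_{2n+1}) + β_n·x'_{2n+1})‖ ≤ δ_{2n+1} for all n ∈ ℕ. If ∑ δ_n < ∞, or if α_n > 0 for all n and lim (δ_{2n} + δ_{2n+1})/α_n = 0, then lim ‖x'_n − x_n‖ = 0. -/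
open Filter


lemma prod_le_exp (α : ℕ → ℝ) (hα : ∀ n, α n ∈ Set.Icc (0:ℝ) 1) (m n : ℕ) :
    ∏ k ∈ Finset.Ico m n, (1 - α k) ≤ Real.exp (-(∑ k ∈ Finset.Ico m n, α k)) := by
  have : Real.exp (-(∑ k ∈ Finset.Ico m n, α k)) = ∏ k ∈ Finset.Ico m n, Real.exp (-(α k)) := by
    rw [← Real.exp_sum, ← Finset.sum_neg_distrib]
  rw [this]
  apply Finset.prod_le_prod
  · intro k _; linarith [(hα k).2]
  · intro k _; linarith [Real.add_one_le_exp (-(α k))]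

lemma prod_tendsto_zero (α : ℕ → ℝ) (hα : ∀ n, α n ∈ Set.Icc (0:ℝ) 1)
    (hαdiv : Tendsto (fun n => ∑ i ∈ Finset.range n, α i) atTop atTop) (m : ℕ) :
    Tendsto (fun n => ∏ k ∈ Finset.Ico m n, (1 - α k)) atTop (nhds 0) := by
  have hb : Tendsto (fun n => Real.exp ((∑ i ∈ Finset.range m, α i) - ∑ i ∈ Finset.range n, α i)) atTop (nhds 0) := by
    apply Real.tendsto_exp_atBot.comp
    apply tendsto_atBot_add_const_left
    exact tendsto_neg_atBot_iff.mpr hαdiv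
  apply squeeze_zero' (g := fun n => Real.exp ((∑ i ∈ Finset.range m, α i) - ∑ i ∈ Finset.range n, α i)) _ _ hb
  · filter_upwards with n
    exact Finset.prod_nonneg fun k _ => by linarith [(hα k).2]
  · filter_upwards [eventually_ge_atTop m] with n hn
    have := prod_le_exp α hα m n
    rwa [Finset.sum_Ico_eq_sub _ hn, neg_sub] at this

lemma xu_bound (a α c : ℕ → ℝ) (hα : ∀ n, α n ∈ Set.Icc (0:ℝ) 1)
    (hc : ∀ n, 0 ≤ c n) (ha : ∀ n, 0 ≤ a n) (m : ℕ)
    (hrec : ∀ n, m ≤ n → a (n+1) ≤ (1 - α n) * a n + c n) :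
    ∀ n, m ≤ n → a n ≤ a m * ∏ k ∈ Finset.Ico m n, (1 - α k) + ∑ k ∈ Finset.Ico m n, c k := by
  intro n hn
  induction n, hn using Nat.le_induction with
  | base => simp
  | succ n hn ih =>
    have h1 : 0 ≤ 1 - α n := by linarith [(hα n).2]
    have h2 : 0 ≤ α n := (hα n).1
    have hprod : 0 ≤ ∏ k ∈ Finset.Ico m n, (1 - α k) :=
      Finset.prod_nonneg fun k _ => by linarith [(hα k).2]
    have hsum : 0 ≤ ∑ k ∈ Finset.Ico m n, c k := Finset.sum_nonneg fun k _ => hc k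
    rw [Finset.prod_Ico_succ_top hn, Finset.sum_Ico_succ_top hn]
    calc a (n+1) ≤ (1 - α n) * a n + c n := hrec n hn
    _ ≤ (1 - α n) * (a m * ∏ k ∈ Finset.Ico m n, (1 - α k) + ∑ k ∈ Finset.Ico m n, c k) + c n := by
        nlinarith [ih]
    _ ≤ a m * ((∏ k ∈ Finset.Ico m n, (1 - α k)) * (1 - α n)) + (∑ k ∈ Finset.Ico m n, c k + c n) := by
        nlinarith [mul_nonneg (ha m) hprod]

lemma xu (a α c : ℕ → ℝ) (ha : ∀ n, 0 ≤ a n) (hα : ∀ n, α n ∈ Set.Icc (0:ℝ) 1)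
    (hc : ∀ n, 0 ≤ c n)
    (hαdiv : Tendsto (fun n => ∑ i ∈ Finset.range n, α i) atTop atTop)
    (hrec : ∀ n, a (n+1) ≤ (1 - α n) * a n + c n)
    (hcase : Summable c ∨ ((∀ n, 0 < α n) ∧ Tendsto (fun n => c n / α n) atTop (nhds 0))) :
    Tendsto a atTop (nhds 0) := by
  rw [Metric.tendsto_atTop]
  intro ε hε
  have hε2 : 0 < ε / 2 := by linarith
  rcases hcase with hsc | ⟨hαpos, hratio⟩
  · -- summable case
    obtain ⟨m, hm⟩ : ∃ m, ∀ n ≥ m, ∑ k ∈ Finset.Ico m n, c k < ε / 2 := by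
      have hC : CauchySeq (fun n => ∑ i ∈ Finset.range n, c i) :=
        hsc.hasSum.tendsto_sum_nat.cauchySeq
      obtain ⟨m, hm⟩ := Metric.cauchySeq_iff'.mp hC (ε/2) hε2
      refine ⟨m, fun n hn => ?_⟩
      have := hm n hn
      rw [Real.dist_eq] at this
      have hIco : ∑ k ∈ Finset.Ico m n, c k
          = (∑ i ∈ Finset.range n, c i) - ∑ i ∈ Finset.range m, c i := by
        rw [Finset.sum_Ico_eq_sub _ hn]
      rw [hIco]
      exact lt_of_le_of_lt (le_abs_self _) this
    have hbd := xu_bound a α c hα hc ha m (fun n _ => hrec n)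
    have hpt : Tendsto (fun n => a m * ∏ k ∈ Finset.Ico m n, (1 - α k)) atTop (nhds 0) := by
      simpa using (prod_tendsto_zero α hα hαdiv m).const_mul (a m)
    obtain ⟨N, hN⟩ := (Metric.tendsto_atTop.mp hpt (ε/2) hε2)
    refine ⟨max m N, fun n hn => ?_⟩
    have hnm : m ≤ n := le_trans (le_max_left _ _) hn
    have hnN : N ≤ n := le_trans (le_max_right _ _) hn
    have h1 := hbd n hnm
    have h2 := hN n hnN
    rw [Real.dist_eq, sub_zero] at h2 ⊢
    rw [abs_of_nonneg (ha n)]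
    have := lt_of_le_of_lt (le_abs_self _) h2
    have := hm n hnm
    linarith
  · -- ratio case
    obtain ⟨m, hm⟩ := (Metric.tendsto_atTop.mp hratio (ε/2) hε2)
    set b : ℕ → ℝ := fun n => max (a n - ε/2) 0 with hb
    have hbnn : ∀ n, 0 ≤ b n := fun n => le_max_right _ _
    have hbrec : ∀ n, m ≤ n → b (n+1) ≤ (1 - α n) * b n + 0 := by
      intro n hn
      have h1 : 0 ≤ 1 - α n := by linarith [(hα n).2]
      have hcn : c n ≤ ε/2 * α n := by
        have := hm n hn
        rw [Real.dist_eq, sub_zero] at this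
        have h := lt_of_le_of_lt (le_abs_self _) this
        have := (hαpos n)
        rw [div_lt_iff₀ this] at h
        linarith
      have : a (n+1) - ε/2 ≤ (1 - α n) * (a n - ε/2) := by
        have := hrec n; nlinarith
      have hle : a n - ε/2 ≤ b n := le_max_left _ _
      have h2 : (1 - α n) * (a n - ε/2) ≤ (1 - α n) * b n := by nlinarith
      have : b (n+1) ≤ (1 - α n) * b n := by
        apply max_le (by linarith) (mul_nonneg h1 (hbnn n))
      linarith
    have hbd := xu_bound b α (fun _ => 0) hα (fun _ => le_refl 0) hbnn m hbrec
    have hpt : Tendsto (fun n => b m * ∏ k ∈ Finset.Ico m n, (1 - α k)) atTop (nhds 0) := by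
      simpa using (prod_tendsto_zero α hα hαdiv m).const_mul (b m)
    obtain ⟨N, hN⟩ := (Metric.tendsto_atTop.mp hpt (ε/2) hε2)
    refine ⟨max m N, fun n hn => ?_⟩
    have hnm : m ≤ n := le_trans (le_max_left _ _) hn
    have hnN : N ≤ n := le_trans (le_max_right _ _) hn
    have h1 := hbd n hnm
    simp only [Finset.sum_const_zero, add_zero] at h1
    have h2 := hN n hnN
    rw [Real.dist_eq, sub_zero] at h2 ⊢
    rw [abs_of_nonneg (ha n)]
    have h3 := lt_of_le_of_lt (le_abs_self _) h2
    have h4 : a n - ε/2 ≤ b n := le_max_left _ _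
    linarith


/-- If `(x'ₙ)` is the alternating Halpern–Mann iteration with error terms
`(δₙ)` and either `∑ δₙ < ∞` or `(δ_{2n} + δ_{2n+1})/αₙ → 0`, then
`‖x'ₙ - xₙ‖ → 0`. -/
theorem stmt18 {H : Type*} [NormedAddCommGroup H] [InnerProductSpace ℝ H]
    (C : Set H) (hCne : C.Nonempty) (hCconv : Convex ℝ C)
    (T U : H → H) (hTmaps : Set.MapsTo T C C) (hUmaps : Set.MapsTo U C C)
    (hTne : ∀ x ∈ C, ∀ y ∈ C, ‖T x - T y‖ ≤ ‖x - y‖)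
    (hUne : ∀ x ∈ C, ∀ y ∈ C, ‖U x - U y‖ ≤ ‖x - y‖)
    (u x₀ : H) (hu : u ∈ C) (hx₀ : x₀ ∈ C)
    (α β : ℕ → ℝ)
    (hα : ∀ n, α n ∈ Set.Icc (0 : ℝ) 1) (hβ : ∀ n, β n ∈ Set.Icc (0 : ℝ) 1)
    (hαdiv : Tendsto (fun n => ∑ i ∈ Finset.range n, α i) atTop atTop)
    (x : ℕ → H) (hx0 : x 0 = x₀)
    (hxodd : ∀ n, x (2 * n + 1) = (1 - α n) • T (x (2 * n)) + α n • u)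
    (hxeven : ∀ n, x (2 * n + 2) = (1 - β n) • U (x (2 * n + 1)) + β n • x (2 * n + 1))
    (δ : ℕ → ℝ) (hδ : ∀ n, 0 ≤ δ n)
    (x' : ℕ → H) (hx'mem : ∀ n, x' n ∈ C) (hx'0 : x' 0 = x₀)
    (hx'odd : ∀ n, ‖x' (2 * n + 1) - ((1 - α n) • T (x' (2 * n)) + α n • u)‖ ≤ δ (2 * n))
    (hx'even : ∀ n,
      ‖x' (2 * n + 2) - ((1 - β n) • U (x' (2 * n + 1)) + β n • x' (2 * n + 1))‖
        ≤ δ (2 * n + 1))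
    (hcase : Summable δ ∨
      ((∀ n, 0 < α n) ∧
        Tendsto (fun n => (δ (2 * n) + δ (2 * n + 1)) / α n) atTop (nhds 0))) :
    Tendsto (fun n => ‖x' n - x n‖) atTop (nhds 0) := by
  -- membership of x n in C
  have hxmem : ∀ n, x (2*n) ∈ C ∧ x (2*n+1) ∈ C := by
    intro n
    induction n with
    | zero =>
      have h0 : x 0 ∈ C := hx0 ▸ hx₀
      refine ⟨h0, ?_⟩
      rw [show 2*0+1 = 2*0+1 from rfl, hxodd 0]
      exact hCconv (hTmaps h0) hu (by linarith [(hα 0).1, (hα 0).2]) (hα 0).1 (by ring)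
    | succ n ih =>
      have h2 : x (2*(n+1)) ∈ C := by
        rw [show 2*(n+1) = 2*n+2 from by ring, hxeven n]
        exact hCconv (hUmaps ih.2) ih.2 (by linarith [(hβ n).1, (hβ n).2]) (hβ n).1 (by ring)
      refine ⟨h2, ?_⟩
      rw [show 2*(n+1)+1 = 2*(n+1)+1 from rfl, hxodd (n+1)]
      exact hCconv (hTmaps (by rwa [show 2*(n+1) = 2*(n+1) from rfl] at h2)) hu
        (by linarith [(hα (n+1)).1, (hα (n+1)).2]) (hα (n+1)).1 (by ring)
  -- odd step bound
  have hodd : ∀ n, ‖x' (2*n+1) - x (2*n+1)‖ ≤ (1 - α n) * ‖x' (2*n) - x (2*n)‖ + δ (2*n) := by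
    intro n
    have h1 : 0 ≤ 1 - α n := by linarith [(hα n).2]
    have htri : ‖x' (2*n+1) - x (2*n+1)‖
        ≤ ‖x' (2*n+1) - ((1 - α n) • T (x' (2*n)) + α n • u)‖
          + ‖((1 - α n) • T (x' (2*n)) + α n • u) - x (2*n+1)‖ :=
      norm_sub_le_norm_sub_add_norm_sub _ _ _
    have heq : ((1 - α n) • T (x' (2*n)) + α n • u) - x (2*n+1)
        = (1 - α n) • (T (x' (2*n)) - T (x (2*n))) := by
      rw [hxodd n, smul_sub]; abel
    have hT := hTne _ (hx'mem (2*n)) _ (hxmem n).1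
    calc ‖x' (2*n+1) - x (2*n+1)‖
        ≤ δ (2*n) + ‖((1 - α n) • T (x' (2*n)) + α n • u) - x (2*n+1)‖ := by
          linarith [htri, hx'odd n]
      _ = δ (2*n) + (1 - α n) * ‖T (x' (2*n)) - T (x (2*n))‖ := by
          rw [heq, norm_smul, Real.norm_eq_abs, abs_of_nonneg h1]
      _ ≤ (1 - α n) * ‖x' (2*n) - x (2*n)‖ + δ (2*n) := by nlinarith
  -- even step bound
  have heven : ∀ n, ‖x' (2*n+2) - x (2*n+2)‖ ≤ ‖x' (2*n+1) - x (2*n+1)‖ + δ (2*n+1) := by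
    intro n
    have hb1 : 0 ≤ 1 - β n := by linarith [(hβ n).2]
    have hb2 : 0 ≤ β n := (hβ n).1
    have htri : ‖x' (2*n+2) - x (2*n+2)‖
        ≤ ‖x' (2*n+2) - ((1 - β n) • U (x' (2*n+1)) + β n • x' (2*n+1))‖
          + ‖((1 - β n) • U (x' (2*n+1)) + β n • x' (2*n+1)) - x (2*n+2)‖ :=
      norm_sub_le_norm_sub_add_norm_sub _ _ _
    have heq : ((1 - β n) • U (x' (2*n+1)) + β n • x' (2*n+1)) - x (2*n+2)
        = (1 - β n) • (U (x' (2*n+1)) - U (x (2*n+1))) + β n • (x' (2*n+1) - x (2*n+1)) := by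
      rw [hxeven n, smul_sub, smul_sub]; abel
    have hU := hUne _ (hx'mem (2*n+1)) _ (hxmem n).2
    have hnrm : ‖((1 - β n) • U (x' (2*n+1)) + β n • x' (2*n+1)) - x (2*n+2)‖
        ≤ (1 - β n) * ‖U (x' (2*n+1)) - U (x (2*n+1))‖ + β n * ‖x' (2*n+1) - x (2*n+1)‖ := by
      rw [heq]
      refine le_trans (norm_add_le _ _) ?_
      rw [norm_smul, norm_smul, Real.norm_eq_abs, Real.norm_eq_abs,
        abs_of_nonneg hb1, abs_of_nonneg hb2]
    have := hx'even n
    nlinarith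
  -- the even-index error satisfies the Xu recurrence
  set a : ℕ → ℝ := fun n => ‖x' (2*n) - x (2*n)‖ with ha
  set c : ℕ → ℝ := fun n => δ (2*n) + δ (2*n+1) with hcdef
  have harec : ∀ n, a (n+1) ≤ (1 - α n) * a n + c n := by
    intro n
    have h1 := hodd n
    have h2 := heven n
    have : 2*(n+1) = 2*n+2 := by ring
    rw [ha, hcdef]
    simp only [this]
    linarith
  have hcnn : ∀ n, 0 ≤ c n := fun n => by
    simp only [hcdef]; linarith [hδ (2*n), hδ (2*n+1)]
  have hcc : Summable c ∨ ((∀ n, 0 < α n) ∧ Tendsto (fun n => c n / α n) atTop (nhds 0)) := by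
    rcases hcase with hs | h
    · left
      exact (hs.comp_injective (fun i j h => by omega)).add
        (hs.comp_injective (fun i j h => by omega))
    · right; exact h
  have haten : Tendsto a atTop (nhds 0) :=
    xu a α c (fun n => norm_nonneg _) hα hcnn hαdiv harec hcc
  -- δ (2n) → 0
  have hδ2 : Tendsto (fun n => δ (2*n)) atTop (nhds 0) := by
    rcases hcase with hs | ⟨hαpos, hratio⟩
    · exact hs.tendsto_atTop_zero.comp
        (Filter.tendsto_atTop_atTop.mpr fun b => ⟨b, fun n hn => by omega⟩)
    · apply squeeze_zero (fun n => hδ (2*n)) (g := fun n => (δ (2*n) + δ (2*n+1)) / α n) _ hratio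
      intro n
      have h1 := hαpos n
      have h2 := (hα n).2
      rw [le_div_iff₀ h1]
      nlinarith [hδ (2*n), hδ (2*n+1)]
  -- odd errors go to zero
  have hodt : Tendsto (fun n => ‖x' (2*n+1) - x (2*n+1)‖) atTop (nhds 0) := by
    have hg : Tendsto (fun n => (1 - α n) * ‖x' (2*n) - x (2*n)‖ + δ (2*n)) atTop (nhds 0) := by
      have hbd : Tendsto (fun n => ‖x' (2*n) - x (2*n)‖ + δ (2*n)) atTop (nhds 0) := by
        simpa using haten.add hδ2
      apply squeeze_zero (fun n => add_nonneg (mul_nonneg (by linarith [(hα n).2])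
        (norm_nonneg _)) (hδ (2*n))) _ hbd
      intro n
      have h2 : 1 - α n ≤ 1 := by linarith [(hα n).1]
      nlinarith [norm_nonneg (x' (2*n) - x (2*n))]
    exact squeeze_zero (fun n => norm_nonneg _) hodd hg
  -- glue
  rw [Metric.tendsto_atTop] at haten hodt ⊢
  intro ε hε
  obtain ⟨N₁, hN₁⟩ := haten ε hε
  obtain ⟨N₂, hN₂⟩ := hodt ε hε
  refine ⟨2 * max N₁ N₂ + 2, fun n hn => ?_⟩
  rcases Nat.even_or_odd n with ⟨k, hk⟩ | ⟨k, hk⟩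
  · have hk' : N₁ ≤ k := by omega
    have := hN₁ k hk'
    simpa [ha, show 2*k = n by omega] using this
  · have hk' : N₂ ≤ k := by omega
    have := hN₂ k hk'
    simpa [show 2*k+1 = n by omega] using this
end

section
/- Let H be a real Hilbert space and α ∈ (0,1]. Let U : H → H be α-averaged, i.e. U = (1 − α)·Id + α·U' for some nonexpansive U' : H → H, and assume Fix(U) ≠ ∅ with p ∈ Fix(U). Let (α_n) ⊂ [0,1] and (β_n) ⊂ [1 − 1/α, 1] satisfy: lim α_n = 0; ∑ α_n = ∞; ∑ |α_{n+1} − α_n| < ∞; ∑ |β_{n+1} − β_n| < ∞; and there exist σ ∈ (0,1) with α ≥ σ and γ ∈ (0, 1/(2σ)] such that 1 − 1/α + γ ≤ β_n ≤ 1 − γ for all n. Let x₀, u ∈ H and let (x_n) be defined by x_0 = x₀, x_{2n+1} = (1 − α_n)·x_{2n} + α_n·u and x_{2n+2} = (1 − β_n)·U(x_{2n+1}) + β_n·x_{2n+1}. Then (x_n) converges strongly to the point z ∈ Fix(U) satisfying ‖u − z‖ ≤ ‖u − y‖ for all y ∈ Fix(U) (the metric projection of u onto Fix(U)). -/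
open Filter RealInnerProductSpace

/-- Products `∏ (1 - a i)` over a tail tend to zero when `∑ a i = ∞`. -/
lemma aux_prod_tendsto_zero (a : ℕ → ℝ) (ha : ∀ n, a n ∈ Set.Icc (0:ℝ) 1)
    (h2 : Tendsto (fun n => ∑ i ∈ Finset.range n, a i) atTop atTop) (N : ℕ) :
    Tendsto (fun k => ∏ j ∈ Finset.range k, (1 - a (N + j))) atTop (nhds 0) := by
  have hbound : ∀ k, ∏ j ∈ Finset.range k, (1 - a (N + j))
      ≤ Real.exp (-(∑ j ∈ Finset.range k, a (N + j))) := by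
    intro k
    calc ∏ j ∈ Finset.range k, (1 - a (N + j))
        ≤ ∏ j ∈ Finset.range k, Real.exp (-(a (N + j))) := by
          apply Finset.prod_le_prod
          · intro i _; have := (ha (N+i)).2; linarith
          · intro i _; have := Real.add_one_le_exp (-(a (N+i))); linarith
      _ = Real.exp (-(∑ j ∈ Finset.range k, a (N + j))) := by
          rw [← Real.exp_sum]; congr 1; simp [Finset.sum_neg_distrib]
  have hnonneg : ∀ k, 0 ≤ ∏ j ∈ Finset.range k, (1 - a (N + j)) := by
    intro k; apply Finset.prod_nonneg; intro i _; have := (ha (N+i)).2; linarith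
  have hsum : Tendsto (fun k => ∑ j ∈ Finset.range k, a (N + j)) atTop atTop := by
    have h2' : Tendsto (fun k => ∑ i ∈ Finset.range (N + k), a i) atTop atTop := by
      have := h2.comp (tendsto_add_atTop_nat N)
      refine this.congr (fun k => ?_)
      simp [Nat.add_comm]
    have heq : ∀ k, ∑ j ∈ Finset.range k, a (N + j)
        = ∑ i ∈ Finset.range (N + k), a i - ∑ i ∈ Finset.range N, a i := by
      intro k; rw [Finset.sum_range_add]; ring
    simp only [heq]
    exact tendsto_atTop_add_const_right atTop _ h2' 
  have hexp : Tendsto (fun k => Real.exp (-(∑ j ∈ Finset.range k, a (N + j)))) atTop (nhds 0) :=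
    Real.tendsto_exp_atBot.comp (tendsto_neg_atBot_iff.mpr hsum)
  exact squeeze_zero hnonneg hbound hexp

/-- Xu's lemma. -/
lemma aux_xu (s a b e : ℕ → ℝ) (hs : ∀ n, 0 ≤ s n) (ha : ∀ n, a n ∈ Set.Icc (0:ℝ) 1)
    (he0 : ∀ n, 0 ≤ e n) (he : Summable e)
    (hrec : ∀ n, s (n+1) ≤ (1 - a n) * s n + a n * b n + e n)
    (hadiv : Tendsto (fun n => ∑ i ∈ Finset.range n, a i) atTop atTop)
    (hb : ∀ ε > 0, ∃ N, ∀ n ≥ N, b n ≤ ε) :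
    Tendsto s atTop (nhds 0) := by
  rw [Metric.tendsto_atTop]
  intro ε hε
  have hε3 : 0 < ε/4 := by linarith
  obtain ⟨N₁, hN₁⟩ := hb (ε/4) hε3
  -- tail of e small
  have htail : ∃ N₂, ∀ k, ∑ j ∈ Finset.range k, e (N₂ + j) ≤ ε/4 := by
    have hsum := he.hasSum.tendsto_sum_nat
    obtain ⟨N₂, hN₂⟩ := (Metric.tendsto_atTop.mp hsum (ε/4) hε3) 
    refine ⟨N₂, fun k => ?_⟩
    have h1 : ∑ j ∈ Finset.range k, e (N₂ + j)
        = ∑ i ∈ Finset.range (N₂ + k), e i - ∑ i ∈ Finset.range N₂, e i := by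
      rw [Finset.sum_range_add]; ring
    have h2 : ∑ i ∈ Finset.range (N₂ + k), e i ≤ ∑' i, e i :=
      Summable.sum_le_tsum _ (fun i _ => he0 i) he
    have h3 := hN₂ N₂ le_rfl
    rw [Real.dist_eq] at h3
    have h4 : ∑' i, e i - ∑ i ∈ Finset.range N₂, e i < ε/4 := by
      have := abs_lt.mp h3; linarith [this.2]
    linarith
  obtain ⟨N₂, hN₂⟩ := htail
  set N := max N₁ N₂ with hN
  -- key induction
  have key : ∀ k, s (N + k) ≤ (∏ j ∈ Finset.range k, (1 - a (N + j))) * s N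
      + ε/4 + ∑ j ∈ Finset.range k, e (N + j) := by
    intro k
    induction k with
    | zero => simp; linarith
    | succ k ih =>
      have hak := ha (N + k)
      have h5 := hrec (N + k)
      have h6 : b (N + k) ≤ ε/4 := hN₁ _ (le_trans (le_max_left _ _) (Nat.le_add_right N k))
      have hprod : 0 ≤ ∏ j ∈ Finset.range k, (1 - a (N + j)) :=
        Finset.prod_nonneg (fun i _ => by have := (ha (N+i)).2; linarith)
      have hNk : N + (k+1) = (N + k) + 1 := by ring
      rw [hNk, Finset.prod_range_succ, Finset.sum_range_succ]
      have h7 : s ((N+k)+1) ≤ (1 - a (N+k)) * s (N+k) + a (N+k) * (ε/4) + e (N+k) := by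
        have := mul_le_mul_of_nonneg_left h6 hak.1
        linarith
      have h8 : (1 - a (N+k)) * s (N+k) ≤ (1 - a (N+k)) *
          ((∏ j ∈ Finset.range k, (1 - a (N + j))) * s N + ε/4 + ∑ j ∈ Finset.range k, e (N + j)) := by
        apply mul_le_mul_of_nonneg_left ih; linarith [hak.2]
      have hE : 0 ≤ ∑ j ∈ Finset.range k, e (N + j) :=
        Finset.sum_nonneg (fun i _ => he0 _)
      have hsN : 0 ≤ s N := hs N
      nlinarith [hak.1, hak.2, mul_nonneg hprod hsN]
  -- tail e over N : since N ≥ N₂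
  have hEtail : ∀ k, ∑ j ∈ Finset.range k, e (N + j) ≤ ε/4 := by
    intro k
    have hd : N₂ ≤ N := le_max_right _ _
    obtain ⟨d, hd'⟩ := Nat.exists_eq_add_of_le hd
    have : ∑ j ∈ Finset.range k, e (N + j) ≤ ∑ j ∈ Finset.range (d + k), e (N₂ + j) := by
      rw [Finset.sum_range_add]
      have : ∀ j ∈ Finset.range k, e (N + j) = e (N₂ + (d + j)) := by
        intro j _; congr 1; omega
      rw [Finset.sum_congr rfl this]
      have : 0 ≤ ∑ i ∈ Finset.range d, e (N₂ + i) := Finset.sum_nonneg (fun i _ => he0 _)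
      linarith
    linarith [hN₂ (d + k)]
  -- product tends to zero
  have hprodt := aux_prod_tendsto_zero a ha hadiv N
  have hpz : Tendsto (fun k => (∏ j ∈ Finset.range k, (1 - a (N + j))) * s N) atTop (nhds 0) := by
    simpa using hprodt.mul_const (s N)
  obtain ⟨K, hK⟩ := (Metric.tendsto_atTop.mp hpz (ε/4) hε3)
  refine ⟨N + K, fun n hn => ?_⟩
  obtain ⟨k, rfl⟩ := Nat.exists_eq_add_of_le hn
  have h9 := key (K + k)
  have h10 := hK (K + k) (Nat.le_add_right K k)
  rw [Real.dist_eq, sub_zero] at h10 ⊢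
  have h11 := abs_lt.mp h10
  have h12 := hEtail (K + k)
  have hNKk : N + K + k = N + (K + k) := by ring
  rw [hNKk]
  rw [abs_of_nonneg (hs _)]
  linarith [h11.2]

set_option maxHeartbeats 1000000 in
/-- Browder-type regularization path: existence of the metric projection of `u`
onto the fixed point set of a nonexpansive map, with the path converging to it. -/
lemma aux_browder {H : Type*} [NormedAddCommGroup H] [InnerProductSpace ℝ H]
    [CompleteSpace H] (U' : H → H) (hU'ne : ∀ x y : H, ‖U' x - U' y‖ ≤ ‖x - y‖)
    (u p : H) (hp : U' p = p) :
    ∃ z : H, U' z = z ∧ (∀ q, U' q = q → ⟪u - z, q - z⟫ ≤ 0) ∧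
      (∀ q, U' q = q → ‖u - z‖ ≤ ‖u - q‖) ∧
      ∃ zs : ℕ → H,
        (∀ k : ℕ, zs k = ((k:ℝ)+2)⁻¹ • u + (1 - ((k:ℝ)+2)⁻¹) • U' (zs k)) ∧
        (∀ k q, U' q = q → ‖zs k - q‖ ≤ ‖u - q‖) ∧
        Tendsto zs atTop (nhds z) := by
  haveI : Nonempty H := ⟨0⟩
  set t : ℕ → ℝ := fun k => ((k:ℝ)+2)⁻¹ with ht
  have htpos : ∀ k, 0 < t k := by
    intro k; show (0:ℝ) < ((k:ℝ)+2)⁻¹; positivity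
  have htlt : ∀ k, t k < 1 := by
    intro k
    show ((k:ℝ)+2)⁻¹ < 1
    have h2 : (1:ℝ) < (k:ℝ)+2 := by have : (0:ℝ) ≤ (k:ℝ) := Nat.cast_nonneg k; linarith
    simpa using inv_lt_one_of_one_lt₀ h2
  have htmono : ∀ k k', k < k' → t k' < t k := by
    intro k k' hkk'
    show ((k':ℝ)+2)⁻¹ < ((k:ℝ)+2)⁻¹
    apply inv_strictAnti₀ (by positivity)
    have : (k:ℝ) < (k':ℝ) := by exact_mod_cast hkk'
    linarith
  -- fixed points of the contractions
  have hzs : ∀ k : ℕ, ∃ w : H, w = t k • u + (1 - t k) • U' w := by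
    intro k
    set f : H → H := fun v => t k • u + (1 - t k) • U' v with hf
    have hK : (⟨1 - t k, by linarith [htlt k]⟩ : NNReal) < 1 := by
      apply NNReal.coe_lt_coe.mp
      show (1 - t k) < (1:ℝ)
      linarith [htpos k]
    have hlip : LipschitzWith ⟨1 - t k, by linarith [htlt k]⟩ f := by
      apply LipschitzWith.of_dist_le_mul
      intro v w
      simp only [hf, dist_eq_norm, NNReal.coe_mk]
      have : t k • u + (1 - t k) • U' v - (t k • u + (1 - t k) • U' w)
          = (1 - t k) • (U' v - U' w) := by module
      rw [this, norm_smul, Real.norm_of_nonneg (by linarith [htlt k])]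
      exact mul_le_mul_of_nonneg_left (hU'ne v w) (by linarith [htlt k])
    have hC : ContractingWith _ f := ⟨hK, hlip⟩
    exact ⟨hC.fixedPoint f, (hC.fixedPoint_isFixedPt).symm⟩
  choose zs hz using hzs
  -- key inequality
  have hkey : ∀ k q, U' q = q → ‖zs k - q‖^2 ≤ ⟪u - q, zs k - q⟫ := by
    intro k q hq
    have e1 : zs k - q = t k • (u - q) + (1 - t k) • (U' (zs k) - q) := by
      have e := hz k
      generalize hg : U' (zs k) = g at e ⊢
      rw [e]; module
    have e2 : ‖zs k - q‖^2 = t k * ⟪u - q, zs k - q⟫ + (1 - t k) * ⟪U' (zs k) - q, zs k - q⟫ := by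
      rw [← real_inner_self_eq_norm_sq]
      nth_rewrite 1 [e1]
      rw [inner_add_left, real_inner_smul_left, real_inner_smul_left]
    have e3 : ⟪U' (zs k) - q, zs k - q⟫ ≤ ‖zs k - q‖^2 := by
      have h1 : ⟪U' (zs k) - q, zs k - q⟫ ≤ ‖U' (zs k) - q‖ * ‖zs k - q‖ := real_inner_le_norm _ _
      have h2 : ‖U' (zs k) - q‖ ≤ ‖zs k - q‖ := by
        have := hU'ne (zs k) q; rw [hq] at this; exact this
      nlinarith [norm_nonneg (zs k - q)]
    have htk := htpos k
    have htk1 := htlt k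
    nlinarith [mul_le_mul_of_nonneg_left e3 (le_of_lt (sub_pos.mpr htk1))]
  have hbd : ∀ k q, U' q = q → ‖zs k - q‖ ≤ ‖u - q‖ := by
    intro k q hq
    have h1 := hkey k q hq
    have h2 : ⟪u - q, zs k - q⟫ ≤ ‖u - q‖ * ‖zs k - q‖ := real_inner_le_norm _ _
    nlinarith [norm_nonneg (zs k - q), norm_nonneg (u - q)]
  -- monotonicity of φ
  set φ : ℕ → ℝ := fun k => ‖u - zs k‖^2 with hφ
  have hmono : ∀ k k', k < k' → φ k + ‖zs k - zs k'‖^2 ≤ φ k' := by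
    intro k k' hkk'
    have i1 : (1 - t k) • (zs k - U' (zs k)) = t k • (u - zs k) := by
      have e := hz k
      generalize hg : U' (zs k) = g at e ⊢
      rw [e]; module
    have i2 : (1 - t k') • (zs k' - U' (zs k')) = t k' • (u - zs k') := by
      have e := hz k'
      generalize hg : U' (zs k') = g at e ⊢
      rw [e]; module
    set X : ℝ := ⟪u - zs k, zs k - zs k'⟫ with hX
    set d : ℝ := ‖zs k - zs k'‖ with hd
    have m0 : ⟪zs k' - U' (zs k'), zs k - zs k'⟫ ≤ ⟪zs k - U' (zs k), zs k - zs k'⟫ := by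
      have h1 : ⟪zs k - U' (zs k), zs k - zs k'⟫ - ⟪zs k' - U' (zs k'), zs k - zs k'⟫
          = ⟪zs k - zs k', zs k - zs k'⟫ - ⟪U' (zs k) - U' (zs k'), zs k - zs k'⟫ := by
        rw [← inner_sub_left, ← inner_sub_left]
        congr 1
        abel
      have h2 : ⟪U' (zs k) - U' (zs k'), zs k - zs k'⟫ ≤ ‖U' (zs k) - U' (zs k')‖ * ‖zs k - zs k'‖ :=
        real_inner_le_norm _ _
      have h3 : ‖U' (zs k) - U' (zs k')‖ ≤ ‖zs k - zs k'‖ := hU'ne _ _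
      have h4 : ⟪zs k - zs k', zs k - zs k'⟫ = d^2 := by rw [real_inner_self_eq_norm_sq]
      nlinarith [norm_nonneg (zs k - zs k')]
    have r1 : (1 - t k) * ⟪zs k - U' (zs k), zs k - zs k'⟫ = t k * X := by
      rw [← real_inner_smul_left, i1, real_inner_smul_left]
    have r2 : (1 - t k') * ⟪zs k' - U' (zs k'), zs k - zs k'⟫ = t k' * (X + d^2) := by
      rw [← real_inner_smul_left, i2, real_inner_smul_left]
      congr 1
      have e : u - zs k' = (u - zs k) + (zs k - zs k') := by abel
      rw [e, inner_add_left, real_inner_self_eq_norm_sq]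
    have hts : t k' < t k := htmono k k' hkk'
    have h5 := htpos k'
    have h6 := htlt k
    have h7 := htlt k'
    have hd2 : (0:ℝ) ≤ d^2 := sq_nonneg d
    have c1 : (0:ℝ) ≤ 1 - t k := by linarith
    have c2 : (0:ℝ) ≤ 1 - t k' := by linarith
    have m1 : 0 ≤ (1 - t k') * ((1 - t k) * ⟪zs k - U' (zs k), zs k - zs k'⟫)
        - (1 - t k) * ((1 - t k') * ⟪zs k' - U' (zs k'), zs k - zs k'⟫) := by
      have h := mul_nonneg (mul_nonneg c2 c1) (sub_nonneg.mpr m0)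
      linear_combination h
    rw [r1, r2] at m1
    have hXnn : 0 ≤ X := by
      nlinarith [mul_nonneg (mul_nonneg (le_of_lt h5) c1) hd2, hts, hd2]
    have e4 : φ k' = φ k + 2 * X + d^2 := by
      show ‖u - zs k'‖^2 = ‖u - zs k‖^2 + 2*X + d^2
      have e : u - zs k' = (u - zs k) + (zs k - zs k') := by abel
      rw [e, norm_add_sq_real]
    have : φ k + d^2 ≤ φ k' := by linarith
    exact this
  have hφmono : Monotone φ := by
    intro k k' hkk'
    rcases Nat.eq_or_lt_of_le hkk' with h | h
    · rw [h]
    · have := hmono k k' h; nlinarith [sq_nonneg ‖zs k - zs k'‖]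
  have hφbdd : ∀ k, φ k ≤ (2 * ‖u - p‖)^2 := by
    intro k
    have h2 := hbd k p hp
    have h1 : ‖u - zs k‖ ≤ 2 * ‖u - p‖ := by
      have h3 : u - zs k = (u - p) + (p - zs k) := by abel
      have h4 := norm_add_le (u - p) (p - zs k)
      rw [← h3] at h4
      rw [norm_sub_rev (zs k) p] at h2
      linarith
    have h5 := norm_nonneg (u - zs k)
    show ‖u - zs k‖^2 ≤ (2 * ‖u - p‖)^2
    nlinarith
  have hφconv : ∃ L, Tendsto φ atTop (nhds L) :=
    ⟨_, tendsto_atTop_ciSup hφmono ⟨(2*‖u - p‖)^2, fun y ⟨k, hk⟩ => hk ▸ hφbdd k⟩⟩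
  obtain ⟨L, hL⟩ := hφconv
  have hφcauchy : CauchySeq φ := hL.cauchySeq
  have hzscauchy : CauchySeq zs := by
    rw [Metric.cauchySeq_iff] at hφcauchy ⊢
    intro ε hε
    obtain ⟨N, hN⟩ := hφcauchy (ε^2) (by positivity)
    refine ⟨N, fun m hm n hn => ?_⟩
    rcases lt_trichotomy m n with h | h | h
    · have h1 := hmono m n h
      have h2 := hN n hn m hm
      rw [Real.dist_eq] at h2
      rw [dist_eq_norm]
      have h3 : ‖zs m - zs n‖^2 < ε^2 := by
        have := abs_lt.mp h2
        linarith [this.2]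
      nlinarith [norm_nonneg (zs m - zs n), hε]
    · rw [h]; simpa using hε
    · have h1 := hmono n m h
      have h2 := hN m hm n hn
      rw [Real.dist_eq] at h2
      rw [dist_eq_norm, norm_sub_rev]
      have h3 : ‖zs n - zs m‖^2 < ε^2 := by
        have := abs_lt.mp h2
        linarith [this.2]
      nlinarith [norm_nonneg (zs n - zs m), hε]
  obtain ⟨z, hzlim⟩ := cauchySeq_tendsto_of_complete hzscauchy
  have hU'cont : Continuous U' := by
    have hl : LipschitzWith 1 U' := by
      apply LipschitzWith.of_dist_le_mul
      intro v w
      simp only [dist_eq_norm, NNReal.coe_one, one_mul]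
      exact hU'ne v w
    exact hl.continuous
  have ht0 : Tendsto t atTop (nhds 0) := by
    have h1 : Tendsto (fun k : ℕ => (k:ℝ)+2) atTop atTop :=
      tendsto_atTop_add_const_right atTop 2 tendsto_natCast_atTop_atTop
    exact tendsto_inv_atTop_zero.comp h1
  have hzfix : U' z = z := by
    have h1 : Tendsto (fun k => t k • u + (1 - t k) • U' (zs k)) atTop
        (nhds ((0:ℝ) • u + ((1:ℝ) - 0) • U' z)) := by
      apply Tendsto.add
      · exact ht0.smul_const u
      · exact ((tendsto_const_nhds.sub ht0).smul (hU'cont.continuousAt.tendsto.comp hzlim))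
    have h3 : Tendsto (fun k => t k • u + (1 - t k) • U' (zs k)) atTop (nhds z) :=
      hzlim.congr (fun k => hz k)
    have h4 := tendsto_nhds_unique h3 h1
    rw [zero_smul, sub_zero, one_smul, zero_add] at h4
    exact h4.symm
  have hvar : ∀ q, U' q = q → ⟪u - z, q - z⟫ ≤ 0 := by
    intro q hq
    have h1 : ∀ k, ‖zs k - q‖^2 ≤ ⟪u - q, zs k - q⟫ := fun k => hkey k q hq
    have h2 : Tendsto (fun k => ‖zs k - q‖^2) atTop (nhds (‖z - q‖^2)) :=
      ((hzlim.sub tendsto_const_nhds).norm).pow 2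
    have h3 : Tendsto (fun k => ⟪u - q, zs k - q⟫) atTop (nhds (⟪u - q, z - q⟫)) :=
      tendsto_const_nhds.inner (hzlim.sub tendsto_const_nhds)
    have h4 : ‖z - q‖^2 ≤ ⟪u - q, z - q⟫ :=
      le_of_tendsto_of_tendsto' h2 h3 h1
    have h5 : ⟪u - q, z - q⟫ = ⟪u - z, z - q⟫ + ‖z - q‖^2 := by
      have e : u - q = (u - z) + (z - q) := by abel
      rw [e, inner_add_left, real_inner_self_eq_norm_sq]
    have h6 : ⟪u - z, q - z⟫ = -⟪u - z, z - q⟫ := by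
      have e : q - z = -(z - q) := by abel
      rw [e, inner_neg_right]
    linarith
  refine ⟨z, hzfix, hvar, ?_, zs, hz, hbd, hzlim⟩
  intro q hq
  have h7 := hvar q hq
  have h8 : ‖u - q‖^2 = ‖u - z‖^2 + 2*⟪u - z, z - q⟫ + ‖z - q‖^2 := by
    have e : u - q = (u - z) + (z - q) := by abel
    rw [e, norm_add_sq_real]
  have h6 : ⟪u - z, q - z⟫ = -⟪u - z, z - q⟫ := by
    have e : q - z = -(z - q) := by abel
    rw [e, inner_neg_right]
  nlinarith [norm_nonneg (u - z), norm_nonneg (u - q), sq_nonneg ‖z - q‖]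

lemma aux_comb_ne {H : Type*} [NormedAddCommGroup H] [InnerProductSpace ℝ H]
    (U' : H → H) (hU'ne : ∀ x y : H, ‖U' x - U' y‖ ≤ ‖x - y‖)
    (c : ℝ) (hc0 : 0 ≤ c) (hc1 : c ≤ 1) (x y : H) :
    ‖((1-c) • x + c • U' x) - ((1-c) • y + c • U' y)‖ ≤ ‖x - y‖ := by
  have e : ((1-c) • x + c • U' x) - ((1-c) • y + c • U' y)
      = (1-c) • (x - y) + c • (U' x - U' y) := by module
  rw [e]
  calc ‖(1-c) • (x - y) + c • (U' x - U' y)‖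
      ≤ ‖(1-c) • (x - y)‖ + ‖c • (U' x - U' y)‖ := norm_add_le _ _
    _ = (1-c) * ‖x - y‖ + c * ‖U' x - U' y‖ := by
        rw [norm_smul, norm_smul, Real.norm_of_nonneg (by linarith), Real.norm_of_nonneg hc0]
    _ ≤ (1-c) * ‖x - y‖ + c * ‖x - y‖ := by
        have := mul_le_mul_of_nonneg_left (hU'ne x y) hc0
        linarith
    _ = ‖x - y‖ := by ring

set_option maxHeartbeats 2000000 in
/-- Strong convergence of the Tikhonov-regularized Krasnoselskii–Mann iteration
for an `α`-averaged operator `U` in a Hilbert space: the iteration converges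
strongly to the metric projection of `u` onto `Fix(U)`. -/
theorem stmt19 {H : Type*} [NormedAddCommGroup H] [InnerProductSpace ℝ H]
    [CompleteSpace H]
    (α : ℝ) (hαpos : 0 < α) (hα1 : α ≤ 1)
    (U U' : H → H)
    (hU'ne : ∀ x y : H, ‖U' x - U' y‖ ≤ ‖x - y‖)
    (hUeq : ∀ x : H, U x = (1 - α) • x + α • U' x)
    (p : H) (hp : U p = p)
    (a β : ℕ → ℝ)
    (ha : ∀ n, a n ∈ Set.Icc (0 : ℝ) 1)
    (hβ : ∀ n, β n ∈ Set.Icc (1 - 1 / α) 1)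
    (h1 : Tendsto a atTop (nhds 0))
    (h2 : Tendsto (fun n => ∑ i ∈ Finset.range n, a i) atTop atTop)
    (h3 : Summable (fun n => |a (n + 1) - a n|))
    (h4 : Summable (fun n => |β (n + 1) - β n|))
    (σ γ : ℝ) (hσ : σ ∈ Set.Ioo (0 : ℝ) 1) (hσα : σ ≤ α)
    (hγpos : 0 < γ) (hγle : γ ≤ 1 / (2 * σ))
    (hβγ : ∀ n, 1 - 1 / α + γ ≤ β n ∧ β n ≤ 1 - γ)
    (x₀ u : H) (x : ℕ → H) (hx0 : x 0 = x₀)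
    (hxodd : ∀ n, x (2 * n + 1) = (1 - a n) • x (2 * n) + a n • u)
    (hxeven : ∀ n, x (2 * n + 2) = (1 - β n) • U (x (2 * n + 1)) + β n • x (2 * n + 1)) :
    ∃ z, U z = z ∧ (∀ y, U y = y → ‖u - z‖ ≤ ‖u - y‖) ∧
      Tendsto x atTop (nhds z) := by
  -- fixed points of U are fixed points of U'
  have hfixU' : ∀ q : H, U q = q → U' q = q := by
    intro q hq
    rw [hUeq] at hq
    have h2' : α • (U' q - q) = 0 := by
      have e : α • (U' q - q) = ((1 - α) • q + α • U' q) - q := by module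
      rw [e, hq, sub_self]
    rcases smul_eq_zero.mp h2' with h3 | h3
    · exact absurd h3 (ne_of_gt hαpos)
    · exact sub_eq_zero.mp h3
  have hU'p : U' p = p := hfixU' p hp
  -- the sequences
  set y : ℕ → H := fun n => x (2*n) with hydef
  set w : ℕ → H := fun n => x (2*n+1) with hwdef
  set c : ℕ → ℝ := fun n => α * (1 - β n) with hcdef
  have hwy : ∀ n, w n = (1 - a n) • y n + a n • u := fun n => hxodd n
  have hαinv : α * (1/α) = 1 := by field_simp
  have hαγ2 : α * γ ≤ 1/2 := by
    obtain ⟨hb1, hb2⟩ := hβγ 0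
    nlinarith
  have hδpos : 0 < α * γ := mul_pos hαpos hγpos
  have hcb : ∀ n, α*γ ≤ c n ∧ c n ≤ 1 - α*γ := by
    intro n
    obtain ⟨hb1, hb2⟩ := hβγ n
    constructor
    · show α*γ ≤ α * (1 - β n)
      have : γ ≤ 1 - β n := by linarith
      exact mul_le_mul_of_nonneg_left this (le_of_lt hαpos)
    · show α * (1 - β n) ≤ 1 - α*γ
      have h5 : 1 - β n ≤ 1/α - γ := by linarith
      have h6 := mul_le_mul_of_nonneg_left h5 (le_of_lt hαpos)
      nlinarith
  have hc0 : ∀ n, 0 ≤ c n := fun n => le_trans (le_of_lt hδpos) (hcb n).1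
  have hc1 : ∀ n, c n ≤ 1 := fun n => le_trans (hcb n).2 (by linarith)
  -- the key recursion
  have hyrec : ∀ n, y (n+1) = (1 - c n) • w n + c n • U' (w n) := by
    intro n
    show x (2*(n+1)) = (1 - α*(1 - β n)) • x (2*n+1) + (α*(1 - β n)) • U' (x (2*n+1))
    have e : 2*(n+1) = 2*n+2 := by ring
    rw [e, hxeven n, hUeq]
    module
  -- boundedness
  set M : ℝ := max ‖y 0 - p‖ ‖u - p‖ with hMdef
  have hM0 : 0 ≤ M := le_trans (norm_nonneg _) (le_max_left _ _)
  have hMy : ∀ n, ‖y n - p‖ ≤ M := by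
    intro n
    induction n with
    | zero => exact le_max_left _ _
    | succ n ih =>
      have hwp : ‖w n - p‖ ≤ M := by
        have e : w n - p = (1 - a n) • (y n - p) + a n • (u - p) := by
          rw [hwy n]; module
        have han := ha n
        calc ‖w n - p‖ = ‖(1 - a n) • (y n - p) + a n • (u - p)‖ := by rw [e]
          _ ≤ ‖(1 - a n) • (y n - p)‖ + ‖a n • (u - p)‖ := norm_add_le _ _
          _ = (1 - a n) * ‖y n - p‖ + a n * ‖u - p‖ := by
              rw [norm_smul, norm_smul, Real.norm_of_nonneg (by linarith [han.2]),
                Real.norm_of_nonneg han.1]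
          _ ≤ (1 - a n) * M + a n * M := by
              have h5 := mul_le_mul_of_nonneg_left ih (by linarith [han.2] : (0:ℝ) ≤ 1 - a n)
              have h6 := mul_le_mul_of_nonneg_left (le_max_right ‖y 0 - p‖ ‖u - p‖) han.1
              linarith
          _ = M := by ring
      have hVp : (1 - c n) • p + c n • U' p = p := by rw [hU'p]; module
      calc ‖y (n+1) - p‖
          = ‖((1 - c n) • w n + c n • U' (w n)) - ((1 - c n) • p + c n • U' p)‖ := by
            rw [hyrec n, hVp]
        _ ≤ ‖w n - p‖ := aux_comb_ne U' hU'ne (c n) (hc0 n) (hc1 n) _ _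
        _ ≤ M := hwp
  have hMw : ∀ n, ‖w n - p‖ ≤ M := by
    intro n
    have e : w n - p = (1 - a n) • (y n - p) + a n • (u - p) := by
      rw [hwy n]; module
    have han := ha n
    calc ‖w n - p‖ = ‖(1 - a n) • (y n - p) + a n • (u - p)‖ := by rw [e]
      _ ≤ ‖(1 - a n) • (y n - p)‖ + ‖a n • (u - p)‖ := norm_add_le _ _
      _ = (1 - a n) * ‖y n - p‖ + a n * ‖u - p‖ := by
          rw [norm_smul, norm_smul, Real.norm_of_nonneg (by linarith [han.2]),
            Real.norm_of_nonneg han.1]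
      _ ≤ (1 - a n) * M + a n * M := by
          have h5 := mul_le_mul_of_nonneg_left (hMy n) (by linarith [han.2] : (0:ℝ) ≤ 1 - a n)
          have h6 := mul_le_mul_of_nonneg_left (le_max_right ‖y 0 - p‖ ‖u - p‖) han.1
          linarith
      _ = M := by ring
  set M₁ : ℝ := M + ‖u - p‖ with hM₁def
  have hM₁0 : 0 ≤ M₁ := by positivity
  have hMuy : ∀ n, ‖u - y n‖ ≤ M₁ := by
    intro n
    have e : u - y n = (u - p) + (p - y n) := by abel
    calc ‖u - y n‖ ≤ ‖u - p‖ + ‖p - y n‖ := by rw [e]; exact norm_add_le _ _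
      _ ≤ M₁ := by
          rw [norm_sub_rev p (y n)]
          have := hMy n
          rw [hM₁def]; linarith
  have hMwU : ∀ n, ‖w n - U' (w n)‖ ≤ 2*M := by
    intro n
    have e : w n - U' (w n) = (w n - p) + (p - U' (w n)) := by abel
    have h5 : ‖p - U' (w n)‖ ≤ ‖w n - p‖ := by
      rw [show p - U' (w n) = -(U' (w n) - U' p) from by rw [hU'p]; abel, norm_neg,
        norm_sub_rev (w n) p]
      rw [norm_sub_rev p (w n)]
      exact hU'ne _ _
    calc ‖w n - U' (w n)‖ ≤ ‖w n - p‖ + ‖p - U' (w n)‖ := by rw [e]; exact norm_add_le _ _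
      _ ≤ 2*M := by linarith [hMw n]
  -- successive differences tend to zero
  set d : ℕ → ℝ := fun n => ‖y (n+1) - y n‖ with hddef
  have hdrec : ∀ n, d (n+1) ≤ (1 - a (n+1)) * d n + a (n+1) * 0
      + (M₁ * |a (n+1) - a n| + 2*M * |β (n+1) - β n|) := by
    intro n
    have hsplit : y (n+1+1) - y (n+1)
        = (((1 - c (n+1)) • w (n+1) + c (n+1) • U' (w (n+1)))
            - ((1 - c (n+1)) • w n + c (n+1) • U' (w n)))
          + ((c n - c (n+1)) • (w n - U' (w n))) := by
      rw [hyrec (n+1), hyrec n]; module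
    have hw2 : w (n+1) - w n
        = (1 - a (n+1)) • (y (n+1) - y n) + (a (n+1) - a n) • (u - y n) := by
      rw [hwy (n+1), hwy n]; module
    have han1 := ha (n+1)
    have hwb : ‖w (n+1) - w n‖ ≤ (1 - a (n+1)) * d n + |a (n+1) - a n| * M₁ := by
      calc ‖w (n+1) - w n‖
          = ‖(1 - a (n+1)) • (y (n+1) - y n) + (a (n+1) - a n) • (u - y n)‖ := by rw [hw2]
        _ ≤ ‖(1 - a (n+1)) • (y (n+1) - y n)‖ + ‖(a (n+1) - a n) • (u - y n)‖ := norm_add_le _ _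
        _ = (1 - a (n+1)) * ‖y (n+1) - y n‖ + |a (n+1) - a n| * ‖u - y n‖ := by
            rw [norm_smul, norm_smul, Real.norm_of_nonneg (by linarith [han1.2]),
              Real.norm_eq_abs]
        _ ≤ (1 - a (n+1)) * d n + |a (n+1) - a n| * M₁ := by
            have h5 : (1 - a (n+1)) * ‖y (n+1) - y n‖ ≤ (1 - a (n+1)) * d n := le_of_eq rfl
            have h6 := mul_le_mul_of_nonneg_left (hMuy n) (abs_nonneg (a (n+1) - a n))
            linarith
    have hcdiff : |c n - c (n+1)| ≤ |β (n+1) - β n| := by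
      have e : c n - c (n+1) = α * (β (n+1) - β n) := by
        show α * (1 - β n) - α * (1 - β (n+1)) = α * (β (n+1) - β n); ring
      rw [e, abs_mul, abs_of_pos hαpos]
      have := abs_nonneg (β (n+1) - β n)
      nlinarith
    have hsecond : ‖(c n - c (n+1)) • (w n - U' (w n))‖ ≤ 2*M * |β (n+1) - β n| := by
      rw [norm_smul, Real.norm_eq_abs]
      have h7 := hMwU n
      have h8 := abs_nonneg (c n - c (n+1))
      have h9 := norm_nonneg (w n - U' (w n))
      have h10 := abs_nonneg (β (n+1) - β n)
      nlinarith [mul_le_mul hcdiff h7 h9 h10]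
    calc d (n+1) = ‖y (n+1+1) - y (n+1)‖ := rfl
      _ = ‖(((1 - c (n+1)) • w (n+1) + c (n+1) • U' (w (n+1)))
            - ((1 - c (n+1)) • w n + c (n+1) • U' (w n)))
          + ((c n - c (n+1)) • (w n - U' (w n)))‖ := by rw [hsplit]
      _ ≤ ‖((1 - c (n+1)) • w (n+1) + c (n+1) • U' (w (n+1)))
            - ((1 - c (n+1)) • w n + c (n+1) • U' (w n))‖
          + ‖(c n - c (n+1)) • (w n - U' (w n))‖ := norm_add_le _ _
      _ ≤ ‖w (n+1) - w n‖ + ‖(c n - c (n+1)) • (w n - U' (w n))‖ := by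
          have := aux_comb_ne U' hU'ne (c (n+1)) (hc0 (n+1)) (hc1 (n+1)) (w (n+1)) (w n)
          linarith
      _ ≤ ((1 - a (n+1)) * d n + |a (n+1) - a n| * M₁) + 2*M * |β (n+1) - β n| := by
          linarith
      _ = (1 - a (n+1)) * d n + a (n+1) * 0 + (M₁ * |a (n+1) - a n| + 2*M * |β (n+1) - β n|) := by
          ring
  have hd0 : Tendsto d atTop (nhds 0) := by
    apply aux_xu d (fun n => a (n+1)) (fun _ => 0)
      (fun n => M₁ * |a (n+1) - a n| + 2*M * |β (n+1) - β n|)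
      (fun n => norm_nonneg _) (fun n => ha (n+1))
      (fun n => add_nonneg (mul_nonneg hM₁0 (abs_nonneg _))
        (mul_nonneg (by linarith) (abs_nonneg _)))
      ((h3.mul_left M₁).add (h4.mul_left (2*M)))
      hdrec
    · have hcomp : Tendsto (fun n => ∑ i ∈ Finset.range (n+1), a i) atTop atTop :=
        h2.comp (tendsto_add_atTop_nat 1)
      have heq : ∀ n, ∑ i ∈ Finset.range n, a (i+1) = ∑ i ∈ Finset.range (n+1), a i - a 0 := by
        intro n; rw [Finset.sum_range_succ']; ring
      simp only [heq]
      exact tendsto_atTop_add_const_right atTop _ hcomp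
    · intro ε hε; exact ⟨0, fun n _ => le_of_lt hε⟩
  -- w n - y n → 0
  have hwyd : Tendsto (fun n => ‖w n - y n‖) atTop (nhds 0) := by
    have hble : ∀ n, ‖w n - y n‖ ≤ a n * M₁ := by
      intro n
      have e : w n - y n = a n • (u - y n) := by rw [hwy n]; module
      rw [e, norm_smul, Real.norm_of_nonneg (ha n).1]
      exact mul_le_mul_of_nonneg_left (hMuy n) (ha n).1
    have hlim : Tendsto (fun n => a n * M₁) atTop (nhds 0) := by
      simpa using h1.mul_const M₁
    exact squeeze_zero (fun n => norm_nonneg _) hble hlim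
  -- w n - U' w n → 0
  have hr : Tendsto (fun n => ‖w n - U' (w n)‖) atTop (nhds 0) := by
    have hkey : ∀ n, ‖w n - U' (w n)‖ ≤ (α*γ)⁻¹ * (‖w n - y n‖ + d n) := by
      intro n
      have e : w n - y (n+1) = c n • (w n - U' (w n)) := by rw [hyrec n]; module
      have h5 : ‖w n - y (n+1)‖ = c n * ‖w n - U' (w n)‖ := by
        rw [e, norm_smul, Real.norm_of_nonneg (hc0 n)]
      have h6 : ‖w n - y (n+1)‖ ≤ ‖w n - y n‖ + d n := by
        have e2 : w n - y (n+1) = (w n - y n) + (y n - y (n+1)) := by abel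
        have h7 : ‖y n - y (n+1)‖ = d n := norm_sub_rev _ _
        calc ‖w n - y (n+1)‖ ≤ ‖w n - y n‖ + ‖y n - y (n+1)‖ := by
              rw [e2]; exact norm_add_le _ _
          _ ≤ ‖w n - y n‖ + d n := by rw [h7]
      have h7 : α*γ ≤ c n := (hcb n).1
      have h8 : α*γ * ‖w n - U' (w n)‖ ≤ ‖w n - y n‖ + d n := by
        nlinarith [norm_nonneg (w n - U' (w n))]
      calc ‖w n - U' (w n)‖ = (α*γ)⁻¹ * (α*γ * ‖w n - U' (w n)‖) := by
            rw [← mul_assoc, inv_mul_cancel₀ (ne_of_gt hδpos), one_mul]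
        _ ≤ (α*γ)⁻¹ * (‖w n - y n‖ + d n) := by
            exact mul_le_mul_of_nonneg_left h8 (by positivity)
    have hlim : Tendsto (fun n => (α*γ)⁻¹ * (‖w n - y n‖ + d n)) atTop (nhds 0) := by
      have := (hwyd.add hd0).const_mul (α*γ)⁻¹
      simpa using this
    exact squeeze_zero (fun n => norm_nonneg _) hkey hlim
  -- y n - U' y n → 0
  have hρ : Tendsto (fun n => ‖y n - U' (y n)‖) atTop (nhds 0) := by
    have hble : ∀ n, ‖y n - U' (y n)‖ ≤ 2*‖w n - y n‖ + ‖w n - U' (w n)‖ := by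
      intro n
      have e : y n - U' (y n) = ((y n - w n) + (w n - U' (w n))) + (U' (w n) - U' (y n)) := by
        abel
      have h5 : ‖U' (w n) - U' (y n)‖ ≤ ‖w n - y n‖ := hU'ne _ _
      have h6 : ‖y n - w n‖ = ‖w n - y n‖ := norm_sub_rev _ _
      calc ‖y n - U' (y n)‖
          ≤ ‖(y n - w n) + (w n - U' (w n))‖ + ‖U' (w n) - U' (y n)‖ := by
            rw [e]; exact norm_add_le _ _
        _ ≤ (‖y n - w n‖ + ‖w n - U' (w n)‖) + ‖U' (w n) - U' (y n)‖ := by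
            linarith [norm_add_le (y n - w n) (w n - U' (w n))]
        _ ≤ 2*‖w n - y n‖ + ‖w n - U' (w n)‖ := by linarith
    have hlim : Tendsto (fun n => 2*‖w n - y n‖ + ‖w n - U' (w n)‖) atTop (nhds 0) := by
      have := (hwyd.const_mul 2).add hr
      simpa using this
    exact squeeze_zero (fun n => norm_nonneg _) hble hlim
  -- Browder path
  obtain ⟨z, hzfix, hvar, hproj, zs, hzs, hzsbd, hzslim⟩ := aux_browder U' hU'ne u p hU'p
  set tk : ℕ → ℝ := fun k => ((k:ℝ)+2)⁻¹ with htkdef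
  have htkpos : ∀ k, 0 < tk k := by
    intro k; show (0:ℝ) < ((k:ℝ)+2)⁻¹; positivity
  have htklt : ∀ k, tk k < 1 := by
    intro k
    show ((k:ℝ)+2)⁻¹ < 1
    have h5 : (1:ℝ) < (k:ℝ)+2 := by
      have : (0:ℝ) ≤ (k:ℝ) := Nat.cast_nonneg k
      linarith
    simpa using inv_lt_one_of_one_lt₀ h5
  have htk0 : Tendsto tk atTop (nhds 0) := by
    have h5 : Tendsto (fun k : ℕ => (k:ℝ)+2) atTop atTop :=
      tendsto_atTop_add_const_right atTop 2 tendsto_natCast_atTop_atTop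
    exact tendsto_inv_atTop_zero.comp h5
  set M₂ : ℝ := ‖u - p‖ + M with hM₂def
  have hM₂0 : 0 ≤ M₂ := by positivity
  have hDle : ∀ k n, ‖zs k - y n‖ ≤ M₂ := by
    intro k n
    have e : zs k - y n = (zs k - p) + (p - y n) := by abel
    have h5 := hzsbd k p hU'p
    have h6 := hMy n
    rw [norm_sub_rev (y n) p] at h6
    calc ‖zs k - y n‖ ≤ ‖zs k - p‖ + ‖p - y n‖ := by rw [e]; exact norm_add_le _ _
      _ ≤ M₂ := by rw [hM₂def]; linarith
  -- key inequality along the path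
  have hkey2 : ∀ k n, 2 * tk k * ⟪u - zs k, y n - zs k⟫
      ≤ (tk k)^2 * M₂^2 + (2*M₂ + ‖y n - U' (y n)‖) * ‖y n - U' (y n)‖ := by
    intro k n
    set ρn : ℝ := ‖y n - U' (y n)‖ with hρn
    set A : H := (1 - tk k) • (U' (zs k) - y n) with hA
    set B : H := (tk k) • (u - y n) with hB
    have hAB : zs k - y n = A + B := by
      rw [hA, hB]
      have e := hzs k
      generalize hg : U' (zs k) = g at e ⊢
      rw [e]
      show ((↑k + 2)⁻¹ : ℝ) • u + (1 - ((↑k + 2)⁻¹:ℝ)) • g - y n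
          = (1 - ((↑k + 2)⁻¹:ℝ)) • (g - y n) + ((↑k + 2)⁻¹:ℝ) • (u - y n)
      module
    set D : ℝ := ‖zs k - y n‖ with hD
    set I : ℝ := ⟪u - zs k, y n - zs k⟫ with hI
    have F1 : D^2 = ‖A‖^2 + 2*⟪A,B⟫ + ‖B‖^2 := by
      rw [hD, hAB]; exact norm_add_sq_real A B
    have F2 : ‖A‖ ≤ (1 - tk k) * (D + ρn) := by
      have h7 : ‖U' (zs k) - y n‖ ≤ D + ρn := by
        have e2 : U' (zs k) - y n = (U' (zs k) - U' (y n)) + (U' (y n) - y n) := by abel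
        have h8 : ‖U' (zs k) - U' (y n)‖ ≤ ‖zs k - y n‖ := hU'ne _ _
        have h9 : ‖U' (y n) - y n‖ = ρn := norm_sub_rev _ _
        calc ‖U' (zs k) - y n‖ ≤ ‖U' (zs k) - U' (y n)‖ + ‖U' (y n) - y n‖ := by
              rw [e2]; exact norm_add_le _ _
          _ ≤ D + ρn := by rw [h9]; exact add_le_add h8 le_rfl
      rw [hA, norm_smul, Real.norm_of_nonneg (by linarith [htklt k])]
      exact mul_le_mul_of_nonneg_left h7 (by linarith [htklt k])
    have F4 : ⟪u - y n, zs k - y n⟫ = -I + D^2 := by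
      have e3 : u - y n = (u - zs k) + (zs k - y n) := by abel
      rw [e3, inner_add_left, real_inner_self_eq_norm_sq, ← hD]
      have e4 : y n - zs k = -(zs k - y n) := by abel
      rw [hI, e4, inner_neg_right]
      ring
    have F3 : ⟪B, A + B⟫ = tk k * (-I + D^2) := by
      rw [← hAB, hB, real_inner_smul_left, F4]
    have hBA : ⟪A,B⟫ = ⟪B, A+B⟫ - ‖B‖^2 := by
      rw [inner_add_right, real_inner_self_eq_norm_sq, real_inner_comm]
      ring
    have G1 : D^2 ≤ ‖A‖^2 + 2*(tk k * (-I + D^2)) := by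
      have hB2 : 0 ≤ ‖B‖^2 := sq_nonneg _
      rw [F3] at hBA
      linarith [F1, hBA]
    have G2 : ‖A‖^2 ≤ (1 - tk k)^2 * (D + ρn)^2 := by
      have := pow_le_pow_left₀ (norm_nonneg A) F2 2
      rw [mul_pow] at this
      exact this
    have hDM : D ≤ M₂ := hDle k n
    have hDnn : 0 ≤ D := norm_nonneg _
    have hρnn : 0 ≤ ρn := norm_nonneg _
    have htp := htkpos k
    have htl := htklt k
    have h9 : D^2 ≤ M₂^2 := pow_le_pow_left₀ hDnn hDM 2
    have h10 : (tk k)^2 * D^2 ≤ (tk k)^2 * M₂^2 :=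
      mul_le_mul_of_nonneg_left h9 (sq_nonneg _)
    have h11 : (1 - tk k)^2 ≤ 1 := by nlinarith
    have h12 : (0:ℝ) ≤ 2*D*ρn + ρn^2 := by positivity
    have h13 : (1 - tk k)^2 * (2*D*ρn + ρn^2) ≤ 2*D*ρn + ρn^2 := by nlinarith
    have h14 : 2*D*ρn ≤ 2*M₂*ρn := by nlinarith
    nlinarith [G1, G2, h10, h13, h14]
  -- limsup step
  set C' : ℝ := 2*‖u - p‖ + (M + ‖p - z‖) + 1 with hC'def
  have hC'0 : 0 < C' := by positivity
  have hyz : ∀ n, ‖y n - z‖ ≤ M + ‖p - z‖ := by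
    intro n
    have e : y n - z = (y n - p) + (p - z) := by abel
    calc ‖y n - z‖ ≤ ‖y n - p‖ + ‖p - z‖ := by rw [e]; exact norm_add_le _ _
      _ ≤ M + ‖p - z‖ := by linarith [hMy n]
  have huzs : ∀ k, ‖u - zs k‖ ≤ 2*‖u - p‖ := by
    intro k
    have e : u - zs k = (u - p) + (p - zs k) := by abel
    have h5 := hzsbd k p hU'p
    rw [norm_sub_rev (zs k) p] at h5
    calc ‖u - zs k‖ ≤ ‖u - p‖ + ‖p - zs k‖ := by rw [e]; exact norm_add_le _ _
      _ ≤ 2*‖u - p‖ := by linarith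
  have hlimI : ∀ ε : ℝ, 0 < ε → ∃ N, ∀ n ≥ N, ⟪u - z, y n - z⟫ ≤ ε := by
    intro ε hε
    -- choose k
    have hA : Tendsto (fun k => ‖zs k - z‖ * C') atTop (nhds 0) := by
      have := ((hzslim.sub (tendsto_const_nhds (x := z))).norm).mul_const C'
      simpa using this
    have hB : Tendsto (fun k => tk k * M₂^2) atTop (nhds 0) := by
      simpa using htk0.mul_const (M₂^2)
    obtain ⟨K₁, hK₁⟩ := (Metric.tendsto_atTop.mp hA) (ε/3) (by linarith)
    obtain ⟨K₂, hK₂⟩ := (Metric.tendsto_atTop.mp hB) (2*ε/3) (by linarith)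
    set k := max K₁ K₂ with hk
    have hk1 : ‖zs k - z‖ * C' ≤ ε/3 := by
      have := hK₁ k (le_max_left _ _)
      rw [Real.dist_eq, sub_zero] at this
      have h5 : 0 ≤ ‖zs k - z‖ * C' := mul_nonneg (norm_nonneg _) (le_of_lt hC'0)
      rw [abs_of_nonneg h5] at this
      linarith
    have hk2 : tk k * M₂^2 ≤ 2*ε/3 := by
      have := hK₂ k (le_max_right _ _)
      rw [Real.dist_eq, sub_zero] at this
      have h5 : 0 ≤ tk k * M₂^2 := mul_nonneg (le_of_lt (htkpos k)) (sq_nonneg _)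
      rw [abs_of_nonneg h5] at this
      linarith
    -- choose N
    have hCρ : Tendsto (fun n => (2*M₂ + ‖y n - U' (y n)‖) * ‖y n - U' (y n)‖) atTop (nhds 0) := by
      have := (tendsto_const_nhds (x := 2*M₂)).add hρ |>.mul hρ
      simpa using this
    obtain ⟨N, hN⟩ := (Metric.tendsto_atTop.mp hCρ) (2 * tk k * (ε/3)) (by
      have := htkpos k; positivity)
    refine ⟨N, fun n hn => ?_⟩
    have h6 := hN n hn
    rw [Real.dist_eq, sub_zero] at h6
    have h7 : 0 ≤ (2*M₂ + ‖y n - U' (y n)‖) * ‖y n - U' (y n)‖ :=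
      mul_nonneg (by linarith [norm_nonneg (y n - U' (y n)), hM₂0]) (norm_nonneg _)
    rw [abs_of_nonneg h7] at h6
    have h8 := hkey2 k n
    have htp := htkpos k
    -- I ≤ 2ε/3
    have hA1 : tk k * (tk k * M₂^2) ≤ tk k * (2*ε/3) :=
      mul_le_mul_of_nonneg_left hk2 (le_of_lt htp)
    have h9 : ⟪u - zs k, y n - zs k⟫ ≤ 2*ε/3 := by
      have hexp : tk k^2 * M₂^2 ≤ tk k * (2*ε/3) := by
        have hexp2 : tk k * (tk k * M₂^2) = tk k^2 * M₂^2 := by ring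
        rw [← hexp2]; exact hA1
      have h9' : 2 * tk k * ⟪u - zs k, y n - zs k⟫ < 2 * tk k * (2*ε/3) := by
        calc 2 * tk k * ⟪u - zs k, y n - zs k⟫
            ≤ tk k^2 * M₂^2 + (2*M₂ + ‖y n - U' (y n)‖) * ‖y n - U' (y n)‖ := h8
          _ < tk k * (2*ε/3) + 2 * tk k * (ε/3) := add_lt_add_of_le_of_lt hexp h6
          _ = 2 * tk k * (2*ε/3) := by ring
      exact le_of_lt ((mul_lt_mul_iff_right₀ (by positivity : (0:ℝ) < 2 * tk k)).mp h9')
    -- transfer to z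
    have dec : ⟪u - z, y n - z⟫ = ⟪u - zs k, y n - zs k⟫ + ⟪u - zs k, zs k - z⟫
        + ⟪zs k - z, y n - z⟫ := by
      have e1 : u - z = (u - zs k) + (zs k - z) := by abel
      have e2 : y n - z = (y n - zs k) + (zs k - z) := by abel
      nth_rewrite 1 [e1]
      nth_rewrite 1 [e2]
      rw [inner_add_left, inner_add_right]
      rw [← e2]
    have h10 : ⟪u - zs k, zs k - z⟫ ≤ ‖u - zs k‖ * ‖zs k - z‖ := real_inner_le_norm _ _
    have h11 : ⟪zs k - z, y n - z⟫ ≤ ‖zs k - z‖ * ‖y n - z‖ := real_inner_le_norm _ _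
    have h12 : ‖u - zs k‖ * ‖zs k - z‖ + ‖zs k - z‖ * ‖y n - z‖ ≤ ‖zs k - z‖ * C' := by
      have h13 := huzs k
      have h14 := hyz n
      have h15 := norm_nonneg (zs k - z)
      nlinarith
    rw [dec]
    nlinarith [h9, h10, h11, h12, hk1]
  -- final recursion
  set s : ℕ → ℝ := fun n => ‖y n - z‖^2 with hsdef
  set b : ℕ → ℝ := fun n => 2*⟪u - z, w n - z⟫ with hbdef
  have hVz : ∀ n : ℕ, (1 - c n) • z + c n • U' z = z := fun n => by rw [hzfix]; module
  have hsrec : ∀ n, s (n+1) ≤ (1 - a n) * s n + a n * b n + 0 := by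
    intro n
    have h5 : ‖y (n+1) - z‖ ≤ ‖w n - z‖ := by
      calc ‖y (n+1) - z‖
          = ‖((1 - c n) • w n + c n • U' (w n)) - ((1 - c n) • z + c n • U' z)‖ := by
            rw [hyrec n, hVz n]
        _ ≤ ‖w n - z‖ := aux_comb_ne U' hU'ne (c n) (hc0 n) (hc1 n) _ _
    have hABz : w n - z = (1 - a n) • (y n - z) + a n • (u - z) := by rw [hwy n]; module
    have h6 : ‖w n - z‖^2 ≤ (1 - a n) * ‖y n - z‖^2 + a n * (2*⟪u - z, w n - z⟫) := by
      set A := (1 - a n) • (y n - z) with hAd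
      set B := a n • (u - z) with hBd
      have F1 : ‖w n - z‖^2 = ‖A‖^2 + 2*⟪A,B⟫ + ‖B‖^2 := by
        rw [hABz]; exact norm_add_sq_real A B
      have hBA : ⟪A,B⟫ = ⟪B, A+B⟫ - ‖B‖^2 := by
        rw [inner_add_right, real_inner_self_eq_norm_sq, real_inner_comm]; ring
      have F3 : ⟪B, A+B⟫ = a n * ⟪u - z, w n - z⟫ := by
        rw [← hABz, hBd, real_inner_smul_left]
      have FA : ‖A‖^2 = (1 - a n)^2 * ‖y n - z‖^2 := by
        rw [hAd, norm_smul, Real.norm_of_nonneg (by linarith [(ha n).2]), mul_pow]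
      have han := ha n
      have hsq : (1 - a n)^2 * ‖y n - z‖^2 ≤ (1 - a n) * ‖y n - z‖^2 := by
        nlinarith [mul_nonneg (mul_nonneg (by linarith [han.2] : (0:ℝ) ≤ 1 - a n) han.1)
          (sq_nonneg ‖y n - z‖)]
      have hBn : 0 ≤ ‖B‖^2 := sq_nonneg _
      linarith [F1, hBA, F3, FA, hsq, hBn]
    have h7 : ‖y (n+1) - z‖^2 ≤ ‖w n - z‖^2 := pow_le_pow_left₀ (norm_nonneg _) h5 2
    show ‖y (n+1) - z‖^2 ≤ (1 - a n) * ‖y n - z‖^2 + a n * (2*⟪u - z, w n - z⟫) + 0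
    linarith
  have hblim : ∀ ε : ℝ, ε > 0 → ∃ N, ∀ n ≥ N, b n ≤ ε := by
    intro ε hε
    obtain ⟨N₁, hN₁⟩ := hlimI (ε/4) (by linarith)
    have hwz : Tendsto (fun n => 2*‖u - z‖*‖w n - y n‖) atTop (nhds 0) := by
      simpa using (hwyd.const_mul (2*‖u - z‖))
    obtain ⟨N₂, hN₂⟩ := (Metric.tendsto_atTop.mp hwz) (ε/2) (by linarith)
    refine ⟨max N₁ N₂, fun n hn => ?_⟩
    have h5 := hN₁ n (le_trans (le_max_left _ _) hn)
    have h6 := hN₂ n (le_trans (le_max_right _ _) hn)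
    rw [Real.dist_eq, sub_zero] at h6
    have h7 : 0 ≤ 2*‖u - z‖*‖w n - y n‖ := by positivity
    rw [abs_of_nonneg h7] at h6
    have dec2 : ⟪u - z, w n - z⟫ = ⟪u - z, y n - z⟫ + ⟪u - z, w n - y n⟫ := by
      have e : w n - z = (y n - z) + (w n - y n) := by abel
      rw [e, inner_add_right]
    have h8 : ⟪u - z, w n - y n⟫ ≤ ‖u - z‖ * ‖w n - y n‖ := real_inner_le_norm _ _
    show 2*⟪u - z, w n - z⟫ ≤ ε
    rw [dec2]
    linarith
  have hs0 : Tendsto s atTop (nhds 0) :=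
    aux_xu s a b (fun _ => 0) (fun n => sq_nonneg _) ha (fun n => le_rfl) summable_zero
      hsrec h2 hblim
  have hynorm : Tendsto (fun n => ‖y n - z‖) atTop (nhds 0) := by
    have h5 : Tendsto (fun n => Real.sqrt (s n)) atTop (nhds (Real.sqrt 0)) :=
      (Real.continuous_sqrt.continuousAt).tendsto.comp hs0
    rw [Real.sqrt_zero] at h5
    refine h5.congr (fun n => ?_)
    show Real.sqrt (‖y n - z‖^2) = ‖y n - z‖
    exact Real.sqrt_sq (norm_nonneg _)
  have hwnorm : Tendsto (fun n => ‖w n - z‖) atTop (nhds 0) := by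
    have hble : ∀ n, ‖w n - z‖ ≤ ‖w n - y n‖ + ‖y n - z‖ := by
      intro n
      have e : w n - z = (w n - y n) + (y n - z) := by abel
      rw [e]; exact norm_add_le _ _
    have hlim : Tendsto (fun n => ‖w n - y n‖ + ‖y n - z‖) atTop (nhds 0) := by
      simpa using hwyd.add hynorm
    exact squeeze_zero (fun n => norm_nonneg _) hble hlim
  refine ⟨z, ?_, ?_, ?_⟩
  · rw [hUeq, hzfix]; module
  · intro q hq
    exact hproj q (hfixU' q hq)
  · rw [Metric.tendsto_atTop]
    intro ε hε
    obtain ⟨N₁, hN₁⟩ := Metric.tendsto_atTop.mp hynorm ε hε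
    obtain ⟨N₂, hN₂⟩ := Metric.tendsto_atTop.mp hwnorm ε hε
    have hK1 : N₁ ≤ max N₁ N₂ := le_max_left _ _
    have hK2 : N₂ ≤ max N₁ N₂ := le_max_right _ _
    refine ⟨2*(max N₁ N₂)+1, fun m hm => ?_⟩
    rcases Nat.even_or_odd m with ⟨r, hr⟩ | ⟨r, hr⟩
    · have hrN : N₁ ≤ r := by omega
      have h5 := hN₁ r hrN
      rw [Real.dist_eq, sub_zero, abs_of_nonneg (norm_nonneg _)] at h5
      have hxm : x m = x (2*r) := congrArg x (by omega)
      rw [dist_eq_norm, hxm]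
      exact h5
    · have hrN : N₂ ≤ r := by omega
      have h5 := hN₂ r hrN
      rw [Real.dist_eq, sub_zero, abs_of_nonneg (norm_nonneg _)] at h5
      have hxm : x m = x (2*r+1) := congrArg x (by omega)
      rw [dist_eq_norm, hxm]
      exact h5
end
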